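/- arXiv:1801.02861 — 3 statements merged into one kernel-verified Lean document; each statement's English description precedes it below -/
import Mathlib

section
/- If a set of measurements M on a finite-dimensional space is generated by a closed convex cone C of positive semidefinite operators containing the identity (i.e., M consists of all POVMs whose elements all lie in C), then K_M = (C − 1) ∩ (1 − C), where K_M is the closed convex hull of {2M − 1 : (M, 1−M) a binary measurement in M}. -/
open scoped BigOperators ComplexOrder

noncomputable section

/-- A POVM (measurement) on a finite-dimensional space. -/
structure POVM (ι : Type) [Fintype ι] [DecidableEq ι] where
  k : ℕ
  T : Fin k → Matrix ι ι ℂ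
  pos : ∀ i, (T i).PosSemidef
  sum_eq : ∑ i, T i = 1

variable {ι : Type} [Fintype ι] [DecidableEq ι]

omit [Fintype ι] [DecidableEq ι] in
lemma real_smul_eq (r : ℝ) (A : Matrix ι ι ℂ) : r • A = (r : ℂ) • A := by
  ext i j; simp [Matrix.smul_apply, Complex.real_smul]

lemma comb_add_one (x y : Matrix ι ι ℂ) (a b : ℝ) (hab : a + b = 1) :
    a • x + b • y + 1 = a • (x + 1) + b • (y + 1) := by
  have hC : (a : ℂ) + (b : ℂ) = 1 := by exact_mod_cast hab
  ext i j
  simp only [Matrix.add_apply, Matrix.smul_apply, Complex.real_smul]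
  linear_combination (-(1 : Matrix ι ι ℂ) i j) * hC

lemma comb_one_sub (x y : Matrix ι ι ℂ) (a b : ℝ) (hab : a + b = 1) :
    1 - (a • x + b • y) = a • (1 - x) + b • (1 - y) := by
  have hC : (a : ℂ) + (b : ℂ) = 1 := by exact_mod_cast hab
  ext i j
  simp only [Matrix.sub_apply, Matrix.add_apply, Matrix.smul_apply, Complex.real_smul]
  linear_combination (-(1 : Matrix ι ι ℂ) i j) * hC

/-- `(A, 1 - A)` is a binary measurement belonging to the measurement class `M`. -/
def IsBinaryIn (M : Set (POVM ι)) (A : Matrix ι ι ℂ) : Prop :=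
  ∃ P ∈ M, ∃ _ : P.k = 2, ∀ i : Fin P.k, P.T i = if (i : ℕ) = 0 then A else 1 - A

/-- The symmetric body `K_M`: the closed convex hull of `{2A - 1 : (A, 1-A) ∈ M}`. -/
def KM (M : Set (POVM ι)) : Set (Matrix ι ι ℂ) :=
  closure (convexHull ℝ {X : Matrix ι ι ℂ | ∃ A, IsBinaryIn M A ∧ X = (2:ℂ) • A - 1})

/-- If `M` consists of all POVMs whose elements lie in a closed convex cone
`C` of positive semidefinite operators with `1 ∈ C`, then
`K_M = (C − 1) ∩ (1 − C)`. -/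
theorem KM_eq_of_cone (C : Set (Matrix ι ι ℂ))
    (hclosed : IsClosed C) (hconv : Convex ℝ C)
    (hcone : ∀ c ∈ C, ∀ t : ℝ, 0 ≤ t → t • c ∈ C)
    (hpsd : ∀ c ∈ C, Matrix.PosSemidef c) (hone : (1 : Matrix ι ι ℂ) ∈ C) :
    KM {P : POVM ι | ∀ i, P.T i ∈ C}
      = {X : Matrix ι ι ℂ | ∃ c ∈ C, X = c - 1} ∩ {X : Matrix ι ι ℂ | ∃ c ∈ C, X = 1 - c} := by
  set R : Set (Matrix ι ι ℂ) :=
    {X : Matrix ι ι ℂ | ∃ c ∈ C, X = c - 1} ∩ {X : Matrix ι ι ℂ | ∃ c ∈ C, X = 1 - c} with hR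
  have hset1 : {X : Matrix ι ι ℂ | ∃ c ∈ C, X = c - 1} = (fun X => X + 1) ⁻¹' C := by
    ext X
    constructor
    · rintro ⟨c, hc, rfl⟩; simpa using hc
    · intro h; exact ⟨X + 1, h, by abel⟩
  have hset2 : {X : Matrix ι ι ℂ | ∃ c ∈ C, X = 1 - c} = (fun X => 1 - X) ⁻¹' C := by
    ext X
    constructor
    · rintro ⟨c, hc, rfl⟩; simpa using hc
    · intro h; exact ⟨1 - X, h, by abel⟩
  have hRclosed : IsClosed R := by
    rw [hR, hset1, hset2]
    exact (hclosed.preimage (continuous_id.add continuous_const)).inter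
      (hclosed.preimage (continuous_const.sub continuous_id))
  have hRconv : Convex ℝ R := by
    rw [hR, hset1, hset2]
    apply Convex.inter
    · intro x hx y hy a b ha hb hab
      have key := comb_add_one x y a b hab
      simpa [Set.mem_preimage, key] using hconv hx hy ha hb hab
    · intro x hx y hy a b ha hb hab
      have key := comb_one_sub x y a b hab
      simpa [Set.mem_preimage, key] using hconv hx hy ha hb hab
  apply Set.Subset.antisymm
  · -- K_M ⊆ R
    apply closure_minimal _ hRclosed
    apply convexHull_min _ hRconv
    rintro X ⟨A, ⟨P, hP, hk, hT⟩, rfl⟩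
    have hA : A ∈ C := by
      have := hP (⟨0, by omega⟩ : Fin P.k)
      rwa [hT, if_pos rfl] at this
    have h1A : (1 : Matrix ι ι ℂ) - A ∈ C := by
      have := hP (⟨1, by omega⟩ : Fin P.k)
      rwa [hT, if_neg (by norm_num)] at this
    constructor
    · refine ⟨(2:ℝ) • A, hcone A hA 2 (by norm_num), ?_⟩
      rw [real_smul_eq]; norm_num
    · refine ⟨(2:ℝ) • (1 - A), hcone _ h1A 2 (by norm_num), ?_⟩
      rw [real_smul_eq]
      ext i j
      simp only [Matrix.sub_apply, Matrix.smul_apply, smul_eq_mul]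
      push_cast
      ring
  · -- R ⊆ K_M
    rintro X ⟨⟨c, hc, h1⟩, ⟨c', hc', h2⟩⟩
    have heq : c - 1 = 1 - c' := h1.symm.trans h2
    set A : Matrix ι ι ℂ := (2:ℝ)⁻¹ • c with hAdef
    have hA : A ∈ C := hcone c hc _ (by norm_num)
    have h1A : (1 : Matrix ι ι ℂ) - A = (2:ℝ)⁻¹ • c' := by
      ext i j
      have hij : (c - 1) i j = ((1 : Matrix ι ι ℂ) - c') i j := by rw [heq]
      simp only [Matrix.sub_apply] at hij
      simp only [hAdef, Matrix.sub_apply, Matrix.smul_apply, Complex.real_smul, smul_eq_mul]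
      push_cast
      linear_combination (-(1:ℂ)/2) * hij
    have h1A' : (1 : Matrix ι ι ℂ) - A ∈ C := by
      rw [h1A]; exact hcone c' hc' _ (by norm_num)
    have h2A : (2:ℂ) • A = c := by
      rw [hAdef, real_smul_eq, smul_smul]
      norm_num
    have hX : X = (2:ℂ) • A - 1 := by rw [h2A, h1]
    refine subset_closure (subset_convexHull ℝ _ ?_)
    refine ⟨A, ?_, hX⟩
    refine ⟨⟨2, fun i => if (i : ℕ) = 0 then A else 1 - A, ?_, ?_⟩, ?_, rfl, fun i => rfl⟩
    · intro i; split
      · exact hpsd A hA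
      · exact hpsd _ h1A'
    · rw [Fin.sum_univ_two]; simp
    · intro i; dsimp only; split
      · exact hA
      · exact h1A'

end
end

section
/- Let M be either the class of separable measurements or PPT measurements, with corresponding state set K being the separable or PPT states. For any Hermitian X on A'B' and any state ρ on CD: (i) ‖X‖_{M(A':B')} ≤ ‖ρ ⊗ X‖_{M(CA':DB')}; (ii) if moreover ρ ∈ K(C:D), then equality holds. -/
open scoped BigOperators ComplexOrder

noncomputable section

/-- The ℓ1 norm of the outcome vector of the measurement `P` applied to `X`. -/
def mval {ι : Type} [Fintype ι] [DecidableEq ι] (P : POVM ι) (X : Matrix ι ι ℂ) : ℝ :=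
  ∑ i, ‖(P.T i * X).trace‖

/-- Tensor (product) of an operator on `α` and one on `β`. -/
def prodOp {α β : Type} (x : Matrix α α ℂ) (y : Matrix β β ℂ) : Matrix (α × β) (α × β) ℂ :=
  fun p q => x p.1 q.1 * y p.2 q.2

/-- The set of separable states across the cut `α : β`. -/
def SepStates (α β : Type) [Fintype α] [Fintype β] : Set (Matrix (α × β) (α × β) ℂ) :=
  convexHull ℝ {σ : Matrix (α × β) (α × β) ℂ |
    ∃ (x : Matrix α α ℂ) (y : Matrix β β ℂ),
      x.PosSemidef ∧ x.trace = 1 ∧ y.PosSemidef ∧ y.trace = 1 ∧ σ = prodOp x y}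

/-- The cone generated by separable states. -/
def SepCone (α β : Type) [Fintype α] [Fintype β] : Set (Matrix (α × β) (α × β) ℂ) :=
  {T | ∃ (t : ℝ) (σ : Matrix (α × β) (α × β) ℂ), 0 ≤ t ∧ σ ∈ SepStates α β ∧ T = t • σ}

/-- Partial transposition (on the second factor). -/
def ptranspose {α β : Type} (ρ : Matrix (α × β) (α × β) ℂ) : Matrix (α × β) (α × β) ℂ :=
  fun p q => ρ (p.1, q.2) (q.1, p.2)

/-- The trace norm restricted to separable measurements (POVMs whose elements lie in the
cone generated by separable states). -/
def sepNorm {α β : Type} [Fintype α] [DecidableEq α] [Fintype β] [DecidableEq β]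
    (X : Matrix (α × β) (α × β) ℂ) : ℝ :=
  sSup {r : ℝ | ∃ P : POVM (α × β), (∀ i, P.T i ∈ SepCone α β) ∧ r = mval P X}

/-- The trace norm restricted to PPT measurements (POVMs whose elements have positive
semidefinite partial transpose). -/
def pptNorm {α β : Type} [Fintype α] [DecidableEq α] [Fintype β] [DecidableEq β]
    (X : Matrix (α × β) (α × β) ℂ) : ℝ :=
  sSup {r : ℝ | ∃ P : POVM (α × β), (∀ i, (ptranspose (P.T i)).PosSemidef) ∧ r = mval P X}

/-- Tensor product of a bipartite operator on `C:D` with one on `A':B'`, arranged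
according to the bipartite cut `CA' : DB'`. -/
def tensorBip {α β γ δ : Type} (Y : Matrix (α × β) (α × β) ℂ) (X : Matrix (γ × δ) (γ × δ) ℂ) :
    Matrix ((α × γ) × (β × δ)) ((α × γ) × (β × δ)) ℂ :=
  fun p q => Y (p.1.1, p.2.1) (q.1.1, q.2.1) * X (p.1.2, p.2.2) (q.1.2, q.2.2)

namespace StmtAux
set_option linter.unusedSectionVars false
set_option linter.unusedVariables false
open Matrix
variable {α β γ δ ε ζ : Type}

/-- middle swap equivalence -/
def mw : (α × β) × (γ × δ) ≃ (α × γ) × (β × δ) where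
  toFun u := ((u.1.1, u.2.1), (u.1.2, u.2.2))
  invFun v := ((v.1.1, v.2.1), (v.1.2, v.2.2))
  left_inv _ := rfl
  right_inv _ := rfl

open MatrixOrder in
lemma psd_eq_ct_mul_self {ι : Type} [Fintype ι] {A : Matrix ι ι ℂ} (hA : A.PosSemidef) :
    ∃ B : Matrix ι ι ℂ, A = B.conjTranspose * B := by
  classical
  have hA' : 0 ≤ A := Matrix.nonneg_iff_posSemidef.mpr hA
  obtain ⟨X, hX, -, hXA⟩ :=
    CFC.exists_sqrt_of_isSelfAdjoint_of_quasispectrumRestricts (IsSelfAdjoint.of_nonneg hA')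
      (QuasispectrumRestricts.nnreal_of_nonneg hA')
  refine ⟨X, ?_⟩
  rw [← hXA]
  congr 1
  exact hX.star_eq.symm

lemma tensorBip_eq_submatrix (Y : Matrix (α × β) (α × β) ℂ) (X : Matrix (γ × δ) (γ × δ) ℂ) :
    tensorBip Y X = (prodOp Y X).submatrix mw.symm mw.symm := rfl

section fin
variable [Fintype α] [Fintype β] [Fintype γ] [Fintype δ] [Fintype ε] [Fintype ζ]

lemma prodOp_mul (a b : Matrix α α ℂ) (c d : Matrix β β ℂ) :
    prodOp a c * prodOp b d = prodOp (a * b) (c * d) := by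
  ext p q
  simp only [prodOp, Matrix.mul_apply, Fintype.sum_prod_type]
  rw [Finset.sum_mul_sum]
  exact Finset.sum_congr rfl fun r1 _ => Finset.sum_congr rfl fun r2 _ => by ring

lemma prodOp_conjTranspose (a : Matrix α α ℂ) (c : Matrix β β ℂ) :
    (prodOp a c)ᴴ = prodOp aᴴ cᴴ := by
  ext p q
  simp [prodOp, Matrix.conjTranspose_apply]

lemma prodOp_posSemidef {a : Matrix α α ℂ} {c : Matrix β β ℂ}
    (ha : a.PosSemidef) (hc : c.PosSemidef) : (prodOp a c).PosSemidef := by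
  obtain ⟨B, rfl⟩ := psd_eq_ct_mul_self ha
  obtain ⟨C, rfl⟩ := psd_eq_ct_mul_self hc
  have : prodOp (Bᴴ * B) (Cᴴ * C) = (prodOp B C)ᴴ * (prodOp B C) := by
    rw [prodOp_conjTranspose, prodOp_mul]
  rw [this]
  exact Matrix.posSemidef_conjTranspose_mul_self _

lemma trace_prodOp (a : Matrix α α ℂ) (c : Matrix β β ℂ) :
    (prodOp a c).trace = a.trace * c.trace := by
  simp only [Matrix.trace, Matrix.diag, prodOp, Fintype.sum_prod_type]
  rw [Finset.sum_mul_sum]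

lemma trace_submatrix_equiv {l m : Type} [Fintype l] [Fintype m] (e : l ≃ m)
    (M : Matrix m m ℂ) : (M.submatrix e e).trace = M.trace :=
  Fintype.sum_equiv e _ _ fun i => rfl

lemma tensorBip_posSemidef {Y : Matrix (α × β) (α × β) ℂ} {X : Matrix (γ × δ) (γ × δ) ℂ}
    (hY : Y.PosSemidef) (hX : X.PosSemidef) : (tensorBip Y X).PosSemidef := by
  rw [tensorBip_eq_submatrix]
  exact (prodOp_posSemidef hY hX).submatrix _

lemma tensorBip_mul (Y Y' : Matrix (α × β) (α × β) ℂ) (X X' : Matrix (γ × δ) (γ × δ) ℂ) :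
    tensorBip Y X * tensorBip Y' X' = tensorBip (Y * Y') (X * X') := by
  rw [tensorBip_eq_submatrix, tensorBip_eq_submatrix, tensorBip_eq_submatrix,
    Matrix.submatrix_mul_equiv _ _ _ mw.symm, prodOp_mul]

lemma trace_tensorBip (Y : Matrix (α × β) (α × β) ℂ) (X : Matrix (γ × δ) (γ × δ) ℂ) :
    (tensorBip Y X).trace = Y.trace * X.trace := by
  rw [tensorBip_eq_submatrix, trace_submatrix_equiv, trace_prodOp]

lemma tensorBip_conjTranspose (Y : Matrix (α × β) (α × β) ℂ) (X : Matrix (γ × δ) (γ × δ) ℂ) :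
    (tensorBip Y X)ᴴ = tensorBip Yᴴ Xᴴ := by
  rw [tensorBip_eq_submatrix, tensorBip_eq_submatrix, Matrix.conjTranspose_submatrix,
    prodOp_conjTranspose]

lemma prodOp_one [DecidableEq α] [DecidableEq β] : prodOp (1 : Matrix α α ℂ) (1 : Matrix β β ℂ) = 1 := by
  ext ⟨a, b⟩ ⟨c, d⟩
  by_cases h1 : a = c <;> by_cases h2 : b = d <;>
    simp [prodOp, Matrix.one_apply, Prod.ext_iff, h1, h2]

lemma tensorBip_one [DecidableEq α] [DecidableEq β] [DecidableEq γ] [DecidableEq δ] :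
    tensorBip (1 : Matrix (α × β) (α × β) ℂ) (1 : Matrix (γ × δ) (γ × δ) ℂ) = 1 := by
  rw [tensorBip_eq_submatrix, prodOp_one, Matrix.submatrix_one_equiv]

lemma ptranspose_one [DecidableEq α] [DecidableEq β] :
    ptranspose (1 : Matrix (α × β) (α × β) ℂ) = 1 := by
  ext ⟨a, b⟩ ⟨c, d⟩
  by_cases h1 : a = c <;> by_cases h2 : b = d <;>
    simp [ptranspose, Matrix.one_apply, Prod.ext_iff, h1, h2, eq_comm]

lemma ptranspose_tensorBip (Y : Matrix (α × β) (α × β) ℂ) (X : Matrix (γ × δ) (γ × δ) ℂ) :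
    ptranspose (tensorBip Y X) = tensorBip (ptranspose Y) (ptranspose X) := rfl

end fin
end StmtAux
namespace StmtAux
set_option linter.unusedSectionVars false
open Matrix
variable {α β γ δ ε ζ : Type}
section fin2
variable [Fintype α] [Fintype β] [Fintype γ] [Fintype δ] [Fintype ε] [Fintype ζ]

/-- Weighted partial trace over the first factor. -/
def wet (m : Matrix ε ε ℂ) (w : Matrix (ε × ζ) (ε × ζ) ℂ) : Matrix ζ ζ ℂ :=
  fun p q => ∑ z : ε × ε, w (z.1, p) (z.2, q) * m z.2 z.1

lemma posSemidef_sum {n : Type} [Fintype n] {ι : Type} (s : Finset ι)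
    (f : ι → Matrix n n ℂ) (h : ∀ i ∈ s, (f i).PosSemidef) :
    (∑ i ∈ s, f i).PosSemidef := by
  classical
  induction s using Finset.induction_on with
  | empty => simpa using Matrix.PosSemidef.zero
  | insert _ _ hx ih =>
      rw [Finset.sum_insert hx]
      exact (h _ (Finset.mem_insert_self _ _)).add
        (ih fun i hi => h i (Finset.mem_insert_of_mem hi))

lemma wet_posSemidef {m : Matrix ε ε ℂ} {w : Matrix (ε × ζ) (ε × ζ) ℂ}
    (hm : m.PosSemidef) (hw : w.PosSemidef) : (wet m w).PosSemidef := by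
  classical
  obtain ⟨C, rfl⟩ := psd_eq_ct_mul_self hm
  set E : ε → Matrix ζ (ε × ζ) ℂ :=
    fun k => Matrix.of (fun p u => if u.2 = p then C k u.1 else 0) with hE
  have key : wet (Cᴴ * C) w = ∑ k : ε, E k * w * (E k)ᴴ := by
    ext p q
    have expand : ∀ k, (E k * w * (E k)ᴴ) p q
        = ∑ z1 : ε, ∑ z2 : ε, C k z1 * w (z1, p) (z2, q) * star (C k z2) := by
      intro k
      simp only [Matrix.mul_apply, Matrix.conjTranspose_apply, hE, Matrix.of_apply,
        Fintype.sum_prod_type, ite_mul, zero_mul, mul_ite, mul_zero, apply_ite (star : ℂ → ℂ),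
        star_zero, Finset.sum_ite_eq', Finset.mem_univ, if_true, Finset.sum_mul]
      rw [Finset.sum_comm]
    simp only [Matrix.sum_apply, expand]
    simp only [wet, Matrix.mul_apply, Matrix.conjTranspose_apply, Fintype.sum_prod_type,
      Finset.mul_sum]
    -- LHS: ∑ z1, ∑ z2, ∑ k, …  RHS: ∑ k, ∑ z1, ∑ z2, …
    conv_rhs => rw [Finset.sum_comm]
    refine Finset.sum_congr rfl fun z1 _ => ?_
    conv_rhs => rw [Finset.sum_comm]
    exact Finset.sum_congr rfl fun z2 _ => Finset.sum_congr rfl fun k _ => by ring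
  rw [key]
  exact posSemidef_sum _ _ fun k _ => hw.mul_mul_conjTranspose_same _

lemma trace_wet_mul (m : Matrix ε ε ℂ) (w : Matrix (ε × ζ) (ε × ζ) ℂ) (X : Matrix ζ ζ ℂ) :
    (wet m w * X).trace = (w * prodOp m X).trace := by
  simp only [Matrix.trace, Matrix.diag, Matrix.mul_apply, wet, prodOp, Finset.sum_mul,
    Fintype.sum_prod_type]
  -- LHS: ∑ p, ∑ q, ∑ z1, ∑ z2, w (z1,p) (z2,q) * m z2 z1 * X q p
  -- RHS: ∑ z1, ∑ p, ∑ z2, ∑ q, w (z1,p) (z2,q) * (m z2 z1 * X q p)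
  conv_lhs => enter [2, p]; rw [Finset.sum_comm]
  rw [Finset.sum_comm]
  refine Finset.sum_congr rfl fun z1 _ => ?_
  refine Finset.sum_congr rfl fun p _ => ?_
  rw [Finset.sum_comm]
  exact Finset.sum_congr rfl fun z2 _ => Finset.sum_congr rfl fun q _ => by ring

lemma wet_one [DecidableEq ζ] [DecidableEq ε] (m : Matrix ε ε ℂ) :
    wet m (1 : Matrix (ε × ζ) (ε × ζ) ℂ) = m.trace • 1 := by
  ext p q
  have h : ∀ z : ε × ε, ((1 : Matrix (ε × ζ) (ε × ζ) ℂ) (z.1, p) (z.2, q)) * m z.2 z.1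
      = if z.2 = z.1 then (if p = q then m z.2 z.1 else 0) else 0 := by
    rintro ⟨z1, z2⟩
    by_cases h1 : z1 = z2 <;> by_cases h2 : p = q <;>
      simp [Matrix.one_apply, Prod.ext_iff, h1, h2, eq_comm]
  simp only [wet, h, Fintype.sum_prod_type, Finset.sum_ite_eq', Finset.mem_univ, if_true]
  by_cases h2 : p = q <;>
    simp [h2, Matrix.one_apply, Matrix.trace, Matrix.diag, smul_eq_mul]

lemma wet_sum {ι : Type} (s : Finset ι) (m : Matrix ε ε ℂ)
    (f : ι → Matrix (ε × ζ) (ε × ζ) ℂ) :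
    wet m (∑ i ∈ s, f i) = ∑ i ∈ s, wet m (f i) := by
  ext p q
  simp only [wet, Matrix.sum_apply, Finset.sum_mul]
  rw [Finset.sum_comm]

lemma wet_smul (r : ℝ) (m : Matrix ε ε ℂ) (w : Matrix (ε × ζ) (ε × ζ) ℂ) :
    wet m (r • w) = r • wet m w := by
  ext p q
  simp [wet, Finset.smul_sum, smul_mul_assoc, mul_assoc]

lemma wet_smul_left (r : ℝ) (m : Matrix ε ε ℂ) (w : Matrix (ε × ζ) (ε × ζ) ℂ) :
    wet (r • m) w = r • wet m w := by
  ext p q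
  simp only [wet, Matrix.smul_apply, Matrix.smul_apply, Finset.smul_sum]
  exact Finset.sum_congr rfl fun z _ => by
    simp [Complex.real_smul]; ring

lemma wet_add (m : Matrix ε ε ℂ) (w w' : Matrix (ε × ζ) (ε × ζ) ℂ) :
    wet m (w + w') = wet m w + wet m w' := by
  ext p q
  simp [wet, add_mul, Finset.sum_add_distrib]

lemma wet_add_left (m m' : Matrix ε ε ℂ) (w : Matrix (ε × ζ) (ε × ζ) ℂ) :
    wet (m + m') w = wet m w + wet m' w := by
  ext p q
  simp [wet, mul_add, Finset.sum_add_distrib]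

end fin2
end StmtAux
namespace StmtAux
set_option linter.unusedSectionVars false
open Matrix
variable {ι : Type} [Fintype ι] [DecidableEq ι]

lemma psd_trace_nonneg {M : Matrix ι ι ℂ} (hM : M.PosSemidef) : 0 ≤ M.trace := by
  exact hM.trace_nonneg

lemma trace_mul_nonneg {A B : Matrix ι ι ℂ} (hA : A.PosSemidef) (hB : B.PosSemidef) :
    0 ≤ (A * B).trace := by
  obtain ⟨C, rfl⟩ := psd_eq_ct_mul_self hB
  rw [show A * (Cᴴ * C) = A * Cᴴ * C from (mul_assoc _ _ _).symm, Matrix.trace_mul_cycle]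
  exact psd_trace_nonneg (hA.mul_mul_conjTranspose_same C)

lemma abs_of_nonneg_cplx {z : ℂ} (h : 0 ≤ z) : (‖z‖ : ℝ) = z.re := by
  have him : z.im = 0 := ((Complex.le_def).mp h).2.symm
  have : z = (z.re : ℂ) := Complex.ext (by simp) (by simp [him])
  nth_rewrite 1 [this]
  rw [Complex.norm_real, Real.norm_eq_abs]
  exact abs_of_nonneg (by simpa using (Complex.le_def.mp h).1)

lemma psd_trace_real {M : Matrix ι ι ℂ} (hM : M.PosSemidef) :
    ∃ r : ℝ, 0 ≤ r ∧ M.trace = (r : ℂ) := by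
  have h := psd_trace_nonneg hM
  have him : M.trace.im = 0 := by simpa using (Complex.le_def.mp h).2.symm
  exact ⟨M.trace.re, by simpa using (Complex.le_def.mp h).1,
    by apply Complex.ext <;> simp [him]⟩

lemma psd_trace_zero {M : Matrix ι ι ℂ} (hM : M.PosSemidef) (h : M.trace = 0) : M = 0 := by
  obtain ⟨B, rfl⟩ := psd_eq_ct_mul_self hM
  have hB : B = 0 := by
    have htr : (Bᴴ * B).trace = ((∑ i : ι, ∑ j : ι, Complex.normSq (B j i) : ℝ) : ℂ) := by
      simp only [Matrix.trace, Matrix.diag, Matrix.mul_apply, Matrix.conjTranspose_apply]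
      push_cast
      refine Finset.sum_congr rfl fun i _ => Finset.sum_congr rfl fun j _ => ?_
      rw [Complex.star_def, mul_comm, Complex.mul_conj]
    rw [htr] at h
    have h0 : (∑ i : ι, ∑ j : ι, Complex.normSq (B j i) : ℝ) = 0 := by exact_mod_cast h
    have hz : ∀ i ∈ Finset.univ, ∀ j ∈ Finset.univ, Complex.normSq (B j i) = 0 := by
      intro i _ j _
      have h1 := (Finset.sum_eq_zero_iff_of_nonneg (fun i _ =>
        Finset.sum_nonneg fun j _ => Complex.normSq_nonneg _)).mp h0 i (Finset.mem_univ _)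
      exact (Finset.sum_eq_zero_iff_of_nonneg fun j _ => Complex.normSq_nonneg _).mp h1 j
        (Finset.mem_univ _)
    ext j i
    exact Complex.normSq_eq_zero.mp (hz i (Finset.mem_univ _) j (Finset.mem_univ _))
  rw [hB]
  simp

lemma psd_real_smul {M : Matrix ι ι ℂ} (hM : M.PosSemidef) {r : ℝ} (hr : 0 ≤ r) :
    ((r : ℂ) • M).PosSemidef := by
  have := hM.smul hr
  simpa [Complex.real_smul] using this

/-- Every Hermitian matrix is a difference of two PSD matrices. -/
lemma herm_decomp {M : Matrix ι ι ℂ} (hM : M.IsHermitian) :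
    ∃ P N : Matrix ι ι ℂ, P.PosSemidef ∧ N.PosSemidef ∧ M = P - N := by
  classical
  set U : Matrix ι ι ℂ := (hM.eigenvectorUnitary : Matrix ι ι ℂ)
  refine ⟨U * Matrix.diagonal (fun i => ((max (hM.eigenvalues i) 0 : ℝ) : ℂ)) * Uᴴ,
    U * Matrix.diagonal (fun i => ((max (-hM.eigenvalues i) 0 : ℝ) : ℂ)) * Uᴴ, ?_, ?_, ?_⟩
  · exact (Matrix.posSemidef_diagonal_iff.mpr fun i =>
      Complex.zero_le_real.mpr (le_max_right _ _)).mul_mul_conjTranspose_same U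
  · exact (Matrix.posSemidef_diagonal_iff.mpr fun i =>
      Complex.zero_le_real.mpr (le_max_right _ _)).mul_mul_conjTranspose_same U
  · have hspec := hM.spectral_theorem
    have hUD : ∀ D D' : Matrix ι ι ℂ, U * D * Uᴴ - U * D' * Uᴴ = U * (D - D') * Uᴴ := by
      intros; noncomm_ring
    rw [hUD, Matrix.diagonal_sub]
    have hfun : (fun i => ((max (hM.eigenvalues i) 0 : ℝ) : ℂ) - ((max (-hM.eigenvalues i) 0 : ℝ) : ℂ))
        = fun i => ((hM.eigenvalues i : ℝ) : ℂ) := by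
      funext i
      rw [← Complex.ofReal_sub, max_zero_sub_max_neg_zero_eq_self]
    rw [hfun]
    simpa [Matrix.star_eq_conjTranspose, Function.comp_def] using hspec

/-- A uniform upper bound for `mval P M` over all POVMs `P`, given Hermitian `M`. -/
lemma bddAbove_mvalSet (M : Matrix ι ι ℂ) (hM : M.IsHermitian) (C : POVM ι → Prop) :
    BddAbove {r : ℝ | ∃ P : POVM ι, C P ∧ r = mval P M} := by
  obtain ⟨Pm, Nm, hP, hN, hdec⟩ := herm_decomp hM
  refine ⟨Pm.trace.re + Nm.trace.re, ?_⟩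
  rintro r ⟨P, -, rfl⟩
  have key : ∀ i, ‖(P.T i * M).trace‖
      ≤ ((P.T i * Pm).trace).re + ((P.T i * Nm).trace).re := by
    intro i
    have h1 : (P.T i * M).trace = (P.T i * Pm).trace - (P.T i * Nm).trace := by
      rw [hdec, Matrix.mul_sub, Matrix.trace_sub]
    rw [h1, sub_eq_add_neg]
    calc ‖(P.T i * Pm).trace + -(P.T i * Nm).trace‖
        ≤ ‖(P.T i * Pm).trace‖ + ‖-(P.T i * Nm).trace‖ :=
          norm_add_le _ _
      _ = ((P.T i * Pm).trace).re + ((P.T i * Nm).trace).re := by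
          rw [norm_neg, abs_of_nonneg_cplx (trace_mul_nonneg (P.pos i) hP),
            abs_of_nonneg_cplx (trace_mul_nonneg (P.pos i) hN)]
  calc mval P M ≤ ∑ i, (((P.T i * Pm).trace).re + ((P.T i * Nm).trace).re) :=
        Finset.sum_le_sum fun i _ => key i
    _ = Pm.trace.re + Nm.trace.re := by
        rw [Finset.sum_add_distrib, ← Complex.re_sum, ← Complex.re_sum,
          ← Matrix.trace_sum, ← Matrix.trace_sum, ← Finset.sum_mul, P.sum_eq, one_mul,
          ← Finset.sum_mul, P.sum_eq, one_mul]

end StmtAux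
namespace StmtAux
set_option linter.unusedSectionVars false
open Matrix
variable {α β γ δ : Type}

/-- The generating set of product states. -/
def PSet (α β : Type) [Fintype α] [Fintype β] : Set (Matrix (α × β) (α × β) ℂ) :=
  {σ : Matrix (α × β) (α × β) ℂ |
    ∃ (x : Matrix α α ℂ) (y : Matrix β β ℂ),
      x.PosSemidef ∧ x.trace = 1 ∧ y.PosSemidef ∧ y.trace = 1 ∧ σ = prodOp x y}

section sep
variable [Fintype α] [Fintype β] [Fintype γ] [Fintype δ]
variable [DecidableEq α] [DecidableEq β] [DecidableEq γ] [DecidableEq δ]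

lemma sepStates_def : SepStates α β = convexHull ℝ (PSet α β) := rfl

lemma state_mem_cone {σ : Matrix (α × β) (α × β) ℂ} (h : σ ∈ SepStates α β) :
    σ ∈ SepCone α β := ⟨1, σ, zero_le_one, h, (one_smul _ _).symm⟩

lemma cone_smul {t : ℝ} (ht : 0 ≤ t) {T : Matrix (α × β) (α × β) ℂ} (h : T ∈ SepCone α β) :
    t • T ∈ SepCone α β := by
  obtain ⟨s, σ, hs, hσ, rfl⟩ := h
  exact ⟨t * s, σ, mul_nonneg ht hs, hσ, smul_smul t s σ⟩

lemma cone_add {T S : Matrix (α × β) (α × β) ℂ} (hT : T ∈ SepCone α β)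
    (hS : S ∈ SepCone α β) : T + S ∈ SepCone α β := by
  obtain ⟨t, σ, ht, hσ, rfl⟩ := hT
  obtain ⟨s, τ, hs, hτ, rfl⟩ := hS
  by_cases h : t + s = 0
  · have ht0 : t = 0 := le_antisymm (by linarith) ht
    have hs0 : s = 0 := le_antisymm (by linarith) hs
    exact ⟨0, σ, le_refl 0, hσ, by simp [ht0, hs0]⟩
  · have hts : 0 < t + s := lt_of_le_of_ne (by positivity) (Ne.symm h)
    refine ⟨t + s, (t / (t + s)) • σ + (s / (t + s)) • τ, le_of_lt hts,
      (convex_convexHull ℝ _) hσ hτ (by positivity) (by positivity) (by field_simp), ?_⟩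
    rw [smul_add, smul_smul, smul_smul]
    have e1 : (t + s) * (t / (t + s)) = t := by field_simp
    have e2 : (t + s) * (s / (t + s)) = s := by field_simp
    rw [e1, e2]

lemma convex_cone : Convex ℝ (SepCone α β) := fun _ hx _ hy _ _ ha hb _ =>
  cone_add (cone_smul ha hx) (cone_smul hb hy)

lemma uniform_psd [Nonempty α] :
    (((Fintype.card α : ℂ))⁻¹ • (1 : Matrix α α ℂ)).PosSemidef := by
  have : ((Fintype.card α : ℂ))⁻¹ = (((Fintype.card α : ℝ)⁻¹ : ℝ) : ℂ) := by push_cast; ring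
  rw [this]
  exact psd_real_smul Matrix.PosSemidef.one (by positivity)

lemma uniform_trace [Nonempty α] :
    (((Fintype.card α : ℂ))⁻¹ • (1 : Matrix α α ℂ)).trace = 1 := by
  rw [Matrix.trace_smul, Matrix.trace_one, smul_eq_mul, inv_mul_cancel₀]
  exact_mod_cast Nat.cast_ne_zero.mpr Fintype.card_ne_zero

lemma maxmix_mem [Nonempty α] [Nonempty β] :
    prodOp (((Fintype.card α : ℂ))⁻¹ • (1 : Matrix α α ℂ))
      (((Fintype.card β : ℂ))⁻¹ • (1 : Matrix β β ℂ)) ∈ SepStates α β :=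
  subset_convexHull ℝ _ ⟨_, _, uniform_psd, uniform_trace, uniform_psd, uniform_trace, rfl⟩

lemma zero_mem_cone [Nonempty α] [Nonempty β] : (0 : Matrix (α × β) (α × β) ℂ) ∈ SepCone α β :=
  ⟨0, _, le_refl 0, maxmix_mem, (zero_smul _ _).symm⟩

lemma psd_pair_mem_cone [Nonempty α] [Nonempty β] {a : Matrix α α ℂ} {b : Matrix β β ℂ}
    (ha : a.PosSemidef) (hb : b.PosSemidef) : prodOp a b ∈ SepCone α β := by
  obtain ⟨ra, hra, htra⟩ := psd_trace_real ha
  obtain ⟨rb, hrb, htrb⟩ := psd_trace_real hb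
  by_cases h1 : ra = 0
  · have ha0 : a = 0 := psd_trace_zero ha (by rw [htra, h1]; simp)
    have : prodOp a b = 0 := by ext p q; simp [prodOp, ha0]
    rw [this]; exact zero_mem_cone
  by_cases h2 : rb = 0
  · have hb0 : b = 0 := psd_trace_zero hb (by rw [htrb, h2]; simp)
    have : prodOp a b = 0 := by ext p q; simp [prodOp, hb0]
    rw [this]; exact zero_mem_cone
  have hra' : (ra : ℂ) ≠ 0 := by exact_mod_cast h1
  have hrb' : (rb : ℂ) ≠ 0 := by exact_mod_cast h2
  refine ⟨ra * rb, prodOp (((ra : ℂ))⁻¹ • a) (((rb : ℂ))⁻¹ • b), mul_nonneg hra hrb,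
    subset_convexHull ℝ _ ⟨_, _, ?_, ?_, ?_, ?_, rfl⟩, ?_⟩
  · rw [show ((ra : ℂ))⁻¹ = (((ra⁻¹ : ℝ)) : ℂ) by push_cast; ring]
    exact psd_real_smul ha (inv_nonneg.mpr hra)
  · rw [Matrix.trace_smul, htra, smul_eq_mul, inv_mul_cancel₀ hra']
  · rw [show ((rb : ℂ))⁻¹ = (((rb⁻¹ : ℝ)) : ℂ) by push_cast; ring]
    exact psd_real_smul hb (inv_nonneg.mpr hrb)
  · rw [Matrix.trace_smul, htrb, smul_eq_mul, inv_mul_cancel₀ hrb']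
  · ext p q
    simp only [prodOp, Matrix.smul_apply, smul_eq_mul, Complex.real_smul]
    push_cast
    field_simp
    try ring

lemma one_mem_cone [Nonempty α] [Nonempty β] :
    (1 : Matrix (α × β) (α × β) ℂ) ∈ SepCone α β := by
  rw [← prodOp_one]
  exact psd_pair_mem_cone Matrix.PosSemidef.one Matrix.PosSemidef.one

lemma tensorBip_smul_left (r : ℝ) (Y : Matrix (α × β) (α × β) ℂ)
    (X : Matrix (γ × δ) (γ × δ) ℂ) : tensorBip (r • Y) X = r • tensorBip Y X := by
  ext p q; simp only [tensorBip, Matrix.smul_apply, Complex.real_smul]; ring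

lemma tensorBip_smul_right (r : ℝ) (Y : Matrix (α × β) (α × β) ℂ)
    (X : Matrix (γ × δ) (γ × δ) ℂ) : tensorBip Y (r • X) = r • tensorBip Y X := by
  ext p q; simp only [tensorBip, Matrix.smul_apply, Complex.real_smul]; ring

lemma tensorBip_add_left (Y Y' : Matrix (α × β) (α × β) ℂ) (X : Matrix (γ × δ) (γ × δ) ℂ) :
    tensorBip (Y + Y') X = tensorBip Y X + tensorBip Y' X := by
  ext p q; simp [tensorBip, add_mul]

lemma tensorBip_add_right (Y : Matrix (α × β) (α × β) ℂ) (X X' : Matrix (γ × δ) (γ × δ) ℂ) :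
    tensorBip Y (X + X') = tensorBip Y X + tensorBip Y X' := by
  ext p q; simp [tensorBip, mul_add]

lemma tensorBip_prodOp (x : Matrix α α ℂ) (y : Matrix β β ℂ) (u : Matrix γ γ ℂ)
    (v : Matrix δ δ ℂ) :
    tensorBip (prodOp x y) (prodOp u v) = prodOp (prodOp x u) (prodOp y v) := by
  ext p q; simp [tensorBip, prodOp]; ring

lemma tensorBip_states {σ : Matrix (α × β) (α × β) ℂ} {τ : Matrix (γ × δ) (γ × δ) ℂ}
    (hσ : σ ∈ SepStates α β) (hτ : τ ∈ SepStates γ δ) :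
    tensorBip σ τ ∈ SepStates (α × γ) (β × δ) := by
  have step1 : ∀ σ' ∈ PSet α β, ∀ τ' ∈ SepStates γ δ,
      tensorBip σ' τ' ∈ SepStates (α × γ) (β × δ) := by
    rintro σ' ⟨x, y, hx, hx1, hy, hy1, rfl⟩ τ' hτ'
    have hsub : SepStates γ δ ⊆ {τ'' | tensorBip (prodOp x y) τ'' ∈ SepStates (α × γ) (β × δ)} := by
      apply convexHull_min
      · rintro τ'' ⟨u, v, hu, hu1, hv, hv1, rfl⟩
        show tensorBip (prodOp x y) (prodOp u v) ∈ SepStates _ _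
        rw [tensorBip_prodOp]
        exact subset_convexHull ℝ _ ⟨prodOp x u, prodOp y v, prodOp_posSemidef hx hu,
          by rw [trace_prodOp, hx1, hu1, mul_one], prodOp_posSemidef hy hv,
          by rw [trace_prodOp, hy1, hv1, mul_one], rfl⟩
      · intro τ1 h1 τ2 h2 a b ha hb hab
        simp only [Set.mem_setOf_eq] at h1 h2 ⊢
        rw [tensorBip_add_right, tensorBip_smul_right, tensorBip_smul_right]
        exact (convex_convexHull ℝ _) h1 h2 ha hb hab
    exact hsub hτ'
  have hsub2 : SepStates α β ⊆
      {σ' | ∀ τ' ∈ SepStates γ δ, tensorBip σ' τ' ∈ SepStates (α × γ) (β × δ)} := by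
    apply convexHull_min
    · exact step1
    · intro σ1 h1 σ2 h2 a b ha hb hab
      simp only [Set.mem_setOf_eq] at h1 h2 ⊢
      intro τ' hτ'
      rw [tensorBip_add_left, tensorBip_smul_left, tensorBip_smul_left]
      exact (convex_convexHull ℝ _) (h1 τ' hτ') (h2 τ' hτ') ha hb hab
  exact hsub2 hσ τ hτ

lemma tensorBip_cone {S : Matrix (α × β) (α × β) ℂ} {T : Matrix (γ × δ) (γ × δ) ℂ}
    (hS : S ∈ SepCone α β) (hT : T ∈ SepCone γ δ) :
    tensorBip S T ∈ SepCone (α × γ) (β × δ) := by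
  obtain ⟨s, σ, hs, hσ, rfl⟩ := hS
  obtain ⟨t, τ, ht, hτ, rfl⟩ := hT
  rw [tensorBip_smul_left, tensorBip_smul_right]
  exact cone_smul hs (cone_smul ht (state_mem_cone (tensorBip_states hσ hτ)))

end sep
end StmtAux
namespace StmtAux
set_option linter.unusedSectionVars false
open Matrix
variable {α β γ δ : Type}
section wptsec
variable [Fintype α] [Fintype β] [Fintype γ] [Fintype δ]
variable [DecidableEq α] [DecidableEq β] [DecidableEq γ] [DecidableEq δ]

/-- Weighted partial trace of a composite operator against a state `ρ` on `αβ`. -/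
def wpt (ρ : Matrix (α × β) (α × β) ℂ)
    (Q : Matrix ((α × γ) × (β × δ)) ((α × γ) × (β × δ)) ℂ) : Matrix (γ × δ) (γ × δ) ℂ :=
  wet ρ (Q.submatrix mw mw)

lemma wpt_posSemidef {ρ : Matrix (α × β) (α × β) ℂ}
    {Q : Matrix ((α × γ) × (β × δ)) ((α × γ) × (β × δ)) ℂ}
    (hρ : ρ.PosSemidef) (hQ : Q.PosSemidef) : (wpt ρ Q).PosSemidef :=
  wet_posSemidef hρ (hQ.submatrix _)

lemma trace_wpt_mul (ρ : Matrix (α × β) (α × β) ℂ)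
    (Q : Matrix ((α × γ) × (β × δ)) ((α × γ) × (β × δ)) ℂ) (X : Matrix (γ × δ) (γ × δ) ℂ) :
    (wpt ρ Q * X).trace = (Q * tensorBip ρ X).trace := by
  rw [wpt, trace_wet_mul, tensorBip_eq_submatrix]
  have hq : (Q.submatrix (⇑mw) (⇑mw)).submatrix (⇑mw.symm) (⇑mw.symm) = Q := by
    rw [Matrix.submatrix_submatrix]
    simp
  calc (Q.submatrix ⇑mw ⇑mw * prodOp ρ X).trace
      = ((Q.submatrix ⇑mw ⇑mw * prodOp ρ X).submatrix ⇑mw.symm ⇑mw.symm).trace :=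
        (trace_submatrix_equiv _ _).symm
    _ = ((Q.submatrix ⇑mw ⇑mw).submatrix ⇑mw.symm ⇑mw.symm *
          (prodOp ρ X).submatrix ⇑mw.symm ⇑mw.symm).trace := by
        rw [Matrix.submatrix_mul_equiv]
    _ = (Q * (prodOp ρ X).submatrix ⇑mw.symm ⇑mw.symm).trace := by rw [hq]

lemma wpt_one (ρ : Matrix (α × β) (α × β) ℂ) :
    wpt ρ (1 : Matrix ((α × γ) × (β × δ)) ((α × γ) × (β × δ)) ℂ) = ρ.trace • 1 := by
  rw [wpt, Matrix.submatrix_one_equiv, wet_one]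

lemma wpt_sum {k : ℕ} (ρ : Matrix (α × β) (α × β) ℂ)
    (f : Fin k → Matrix ((α × γ) × (β × δ)) ((α × γ) × (β × δ)) ℂ) :
    wpt ρ (∑ i, f i) = ∑ i, wpt ρ (f i) := by
  rw [wpt, show (∑ i, f i).submatrix (⇑mw) (⇑mw) = ∑ i, (f i).submatrix (⇑mw) (⇑mw) by
    ext p q; simp [Matrix.sum_apply], wet_sum]
  rfl

lemma wpt_smul (r : ℝ) (ρ : Matrix (α × β) (α × β) ℂ)
    (Q : Matrix ((α × γ) × (β × δ)) ((α × γ) × (β × δ)) ℂ) :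
    wpt ρ (r • Q) = r • wpt ρ Q := by
  rw [wpt, show (r • Q).submatrix (⇑mw) (⇑mw) = r • Q.submatrix (⇑mw) (⇑mw) by
    ext p q; simp, wet_smul]
  rfl

lemma wpt_add (ρ : Matrix (α × β) (α × β) ℂ)
    (Q Q' : Matrix ((α × γ) × (β × δ)) ((α × γ) × (β × δ)) ℂ) :
    wpt ρ (Q + Q') = wpt ρ Q + wpt ρ Q' := by
  rw [wpt, show (Q + Q').submatrix (⇑mw) (⇑mw)
      = Q.submatrix (⇑mw) (⇑mw) + Q'.submatrix (⇑mw) (⇑mw) by ext p q; simp, wet_add]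
  rfl

lemma wpt_smul_left (r : ℝ) (ρ : Matrix (α × β) (α × β) ℂ)
    (Q : Matrix ((α × γ) × (β × δ)) ((α × γ) × (β × δ)) ℂ) :
    wpt (r • ρ) Q = r • wpt ρ Q := wet_smul_left _ _ _

lemma wpt_add_left (ρ ρ' : Matrix (α × β) (α × β) ℂ)
    (Q : Matrix ((α × γ) × (β × δ)) ((α × γ) × (β × δ)) ℂ) :
    wpt (ρ + ρ') Q = wpt ρ Q + wpt ρ' Q := wet_add_left _ _ _

lemma ptranspose_wpt (ρ : Matrix (α × β) (α × β) ℂ)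
    (Q : Matrix ((α × γ) × (β × δ)) ((α × γ) × (β × δ)) ℂ) :
    ptranspose (wpt ρ Q) = wpt (ptranspose ρ) (ptranspose Q) := by
  ext p q
  simp only [ptranspose, wpt, wet, Matrix.submatrix_apply]
  refine Fintype.sum_equiv ⟨fun z => ((z.1.1, z.2.2), (z.2.1, z.1.2)),
    fun z => ((z.1.1, z.2.2), (z.2.1, z.1.2)), fun _ => rfl, fun _ => rfl⟩ _ _ fun z => rfl

lemma wpt_prodOp (m : Matrix α α ℂ) (n : Matrix β β ℂ) (w : Matrix (α × γ) (α × γ) ℂ)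
    (z : Matrix (β × δ) (β × δ) ℂ) :
    wpt (prodOp m n) (prodOp w z) = prodOp (wet m w) (wet n z) := by
  ext p q
  simp only [wpt, wet, prodOp, Matrix.submatrix_apply, Fintype.sum_prod_type,
    Finset.sum_mul_sum]
  refine Finset.sum_congr rfl fun a _ => Finset.sum_congr rfl fun b _ =>
    Finset.sum_congr rfl fun a' _ => Finset.sum_congr rfl fun b' _ => ?_
  dsimp [mw]
  ring

/-- Mapping separable cone elements through the weighted partial trace. -/
lemma wpt_cone {ρ : Matrix (α × β) (α × β) ℂ}
    {Q : Matrix ((α × γ) × (β × δ)) ((α × γ) × (β × δ)) ℂ}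
    (hρ : ρ ∈ SepStates α β) (hQ : Q ∈ SepCone (α × γ) (β × δ)) :
    wpt ρ Q ∈ SepCone γ δ := by
  obtain ⟨t, σ, ht, hσ, rfl⟩ := hQ
  rw [wpt_smul]
  refine cone_smul ht ?_
  have step1 : ∀ ρ' ∈ PSet α β, ∀ σ' ∈ SepStates (α × γ) (β × δ),
      wpt ρ' σ' ∈ SepCone γ δ := by
    rintro ρ' ⟨m, n, hm, hm1, hn, hn1, rfl⟩ σ' hσ'
    have hsub : SepStates (α × γ) (β × δ) ⊆
        {σ'' | wpt (prodOp m n) σ'' ∈ SepCone γ δ} := by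
      apply convexHull_min
      · rintro σ'' ⟨w, z, hw, hw1, hz, hz1, rfl⟩
        simp only [Set.mem_setOf_eq]
        rw [wpt_prodOp]
        have hγ : Nonempty γ := by
          have hne : Nonempty (α × γ) := by
            by_contra h
            rw [not_nonempty_iff] at h
            have h0 := Matrix.trace_eq_zero_of_isEmpty w
            rw [hw1] at h0
            exact one_ne_zero h0
          exact ⟨hne.some.2⟩
        have hδ : Nonempty δ := by
          have hne : Nonempty (β × δ) := by
            by_contra h
            rw [not_nonempty_iff] at h
            have h0 := Matrix.trace_eq_zero_of_isEmpty z
            rw [hz1] at h0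
            exact one_ne_zero h0
          exact ⟨hne.some.2⟩
        exact psd_pair_mem_cone (wet_posSemidef hm hw) (wet_posSemidef hn hz)
      · intro σ1 h1 σ2 h2 a b ha hb hab
        simp only [Set.mem_setOf_eq] at h1 h2 ⊢
        rw [wpt_add, wpt_smul, wpt_smul]
        exact convex_cone h1 h2 ha hb hab
    exact hsub hσ'
  have hsub2 : SepStates α β ⊆
      {ρ' | ∀ σ' ∈ SepStates (α × γ) (β × δ), wpt ρ' σ' ∈ SepCone γ δ} := by
    apply convexHull_min
    · exact step1
    · intro ρ1 h1 ρ2 h2 a b ha hb hab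
      simp only [Set.mem_setOf_eq] at h1 h2 ⊢
      intro σ' hσ'
      rw [wpt_add_left, wpt_smul_left, wpt_smul_left]
      exact convex_cone (h1 σ' hσ') (h2 σ' hσ') ha hb hab
  exact hsub2 hρ σ hσ

end wptsec
end StmtAux
open StmtAux
/-- For `M` either the class of separable or PPT measurements (with `K` the
separable resp. PPT states), for any Hermitian `X` on `A'B'` and state `ρ` on `CD`:
(i) `‖X‖_{M(A':B')} ≤ ‖ρ ⊗ X‖_{M(CA':DB')}`; (ii) if moreover `ρ ∈ K(C:D)`, equality. -/
theorem restrictedNorm_tensor_state {α β γ δ : Type}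
    [Fintype α] [DecidableEq α] [Fintype β] [DecidableEq β]
    [Fintype γ] [DecidableEq γ] [Fintype δ] [DecidableEq δ]
    (X : Matrix (γ × δ) (γ × δ) ℂ) (hX : X.IsHermitian)
    (ρ : Matrix (α × β) (α × β) ℂ) (hρ : ρ.PosSemidef) (hρtr : ρ.trace = 1) :
    (sepNorm X ≤ sepNorm (tensorBip ρ X)) ∧
    (pptNorm X ≤ pptNorm (tensorBip ρ X)) ∧
    (ρ ∈ SepStates α β → sepNorm (tensorBip ρ X) = sepNorm X) ∧
    ((ptranspose ρ).PosSemidef → pptNorm (tensorBip ρ X) = pptNorm X) := by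
  classical
  haveI hα : Nonempty α := by
    by_contra h
    rw [not_nonempty_iff] at h
    have h0 := Matrix.trace_eq_zero_of_isEmpty ρ
    rw [hρtr] at h0
    exact one_ne_zero h0
  haveI hβ : Nonempty β := by
    by_contra h
    rw [not_nonempty_iff] at h
    have h0 := Matrix.trace_eq_zero_of_isEmpty ρ
    rw [hρtr] at h0
    exact one_ne_zero h0
  have hXbigH : (tensorBip ρ X).IsHermitian := by
    show Matrix.conjTranspose (tensorBip ρ X) = tensorBip ρ X
    rw [tensorBip_conjTranspose, hρ.1.eq, hX.eq]
  -- the four sets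
  set SSmall : Set ℝ :=
    {r : ℝ | ∃ P : POVM (γ × δ), (∀ i, P.T i ∈ SepCone γ δ) ∧ r = mval P X} with hSSmall
  set SBig : Set ℝ := {r : ℝ | ∃ P : POVM ((α × γ) × (β × δ)),
    (∀ i, P.T i ∈ SepCone (α × γ) (β × δ)) ∧ r = mval P (tensorBip ρ X)} with hSBig
  set TSmall : Set ℝ :=
    {r : ℝ | ∃ P : POVM (γ × δ), (∀ i, (ptranspose (P.T i)).PosSemidef) ∧ r = mval P X}
    with hTSmall
  set TBig : Set ℝ := {r : ℝ | ∃ P : POVM ((α × γ) × (β × δ)),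
    (∀ i, (ptranspose (P.T i)).PosSemidef) ∧ r = mval P (tensorBip ρ X)} with hTBig
  -- a common trace computation for the lifted POVM
  have htrace_lift : ∀ T : Matrix (γ × δ) (γ × δ) ℂ,
      ((tensorBip (1 : Matrix (α × β) (α × β) ℂ) T) * tensorBip ρ X).trace = (T * X).trace := by
    intro T
    rw [tensorBip_mul, one_mul, trace_tensorBip, hρtr, one_mul]
  have hsum_lift : ∀ P : POVM (γ × δ),
      ∑ i, tensorBip (1 : Matrix (α × β) (α × β) ℂ) (P.T i) = 1 := by
    intro P
    have : ∑ i, tensorBip (1 : Matrix (α × β) (α × β) ℂ) (P.T i)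
        = tensorBip (1 : Matrix (α × β) (α × β) ℂ) (∑ i, P.T i) := by
      ext p q
      simp [tensorBip, Matrix.sum_apply, Finset.mul_sum]
    rw [this, P.sum_eq, tensorBip_one]
  have hmval_lift : ∀ P : POVM (γ × δ), ∀ (h1 : _) (h2 : _), mval P X =
      mval (⟨P.k, fun i => tensorBip (1 : Matrix (α × β) (α × β) ℂ) (P.T i), h1, h2⟩ :
        POVM ((α × γ) × (β × δ))) (tensorBip ρ X) := by
    intro P h1 h2
    simp only [mval]
    exact (Finset.sum_congr rfl fun i _ => by rw [htrace_lift]).symm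
  -- forward inclusions
  have incl_sep : SSmall ⊆ SBig := by
    rintro r ⟨P, hP, rfl⟩
    refine ⟨⟨P.k, fun i => tensorBip 1 (P.T i),
      fun i => tensorBip_posSemidef Matrix.PosSemidef.one (P.pos i), hsum_lift P⟩,
      fun i => tensorBip_cone one_mem_cone (hP i), hmval_lift P _ _⟩
  have incl_ppt : TSmall ⊆ TBig := by
    rintro r ⟨P, hP, rfl⟩
    refine ⟨⟨P.k, fun i => tensorBip 1 (P.T i),
      fun i => tensorBip_posSemidef Matrix.PosSemidef.one (P.pos i), hsum_lift P⟩,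
      fun i => ?_, hmval_lift P _ _⟩
    show (ptranspose (tensorBip 1 (P.T i))).PosSemidef
    rw [ptranspose_tensorBip, ptranspose_one]
    exact tensorBip_posSemidef Matrix.PosSemidef.one (hP i)
  -- reverse constructions
  have hsum_push : ∀ Q : POVM ((α × γ) × (β × δ)), ∑ i, wpt ρ (Q.T i) = 1 := by
    intro Q
    rw [← wpt_sum, Q.sum_eq, wpt_one, hρtr, one_smul]
  have hmval_push : ∀ Q : POVM ((α × γ) × (β × δ)), ∀ (h1 : _) (h2 : _),
      mval Q (tensorBip ρ X) =
      mval (⟨Q.k, fun i => wpt ρ (Q.T i), h1, h2⟩ : POVM (γ × δ)) X := by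
    intro Q h1 h2
    simp only [mval]
    exact Finset.sum_congr rfl fun i _ => by rw [trace_wpt_mul]
  have incl_sep_rev : ρ ∈ SepStates α β → SBig ⊆ SSmall := by
    intro hsep r
    rintro ⟨Q, hQ, rfl⟩
    exact ⟨⟨Q.k, fun i => wpt ρ (Q.T i), fun i => wpt_posSemidef hρ (Q.pos i), hsum_push Q⟩,
      fun i => wpt_cone hsep (hQ i), hmval_push Q _ _⟩
  have incl_ppt_rev : (ptranspose ρ).PosSemidef → TBig ⊆ TSmall := by
    intro hppt r
    rintro ⟨Q, hQ, rfl⟩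
    refine ⟨⟨Q.k, fun i => wpt ρ (Q.T i), fun i => wpt_posSemidef hρ (Q.pos i), hsum_push Q⟩,
      fun i => ?_, hmval_push Q _ _⟩
    show (ptranspose (wpt ρ (Q.T i))).PosSemidef
    rw [ptranspose_wpt]
    exact wpt_posSemidef hppt (hQ i)
  -- nonemptiness of the small sets
  have hSne : SSmall.Nonempty := by
    rcases isEmpty_or_nonempty (γ × δ) with hE | hNE
    · refine ⟨mval (⟨0, fun i => i.elim0, fun i => i.elim0, ?_⟩ : POVM (γ × δ)) X,
        ⟨0, fun i => i.elim0, fun i => i.elim0, ?_⟩, fun i => i.elim0, rfl⟩ <;>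
      · ext p q
        exact isEmptyElim p
    · haveI hγ : Nonempty γ := ⟨hNE.some.1⟩
      haveI hδ : Nonempty δ := ⟨hNE.some.2⟩
      exact ⟨mval (⟨1, fun _ => 1, fun _ => Matrix.PosSemidef.one, by simp⟩ : POVM (γ × δ)) X,
        ⟨1, fun _ => 1, fun _ => Matrix.PosSemidef.one, by simp⟩, fun _ => one_mem_cone, rfl⟩
  have hTne : TSmall.Nonempty := by
    refine ⟨mval (⟨1, fun _ => 1, fun _ => Matrix.PosSemidef.one, by simp⟩ : POVM (γ × δ)) X,
      ⟨1, fun _ => 1, fun _ => Matrix.PosSemidef.one, by simp⟩, fun _ => ?_, rfl⟩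
    show (ptranspose (1 : Matrix (γ × δ) (γ × δ) ℂ)).PosSemidef
    rw [ptranspose_one]
    exact Matrix.PosSemidef.one
  -- boundedness of the big sets
  have hSbdd : BddAbove SBig := bddAbove_mvalSet (tensorBip ρ X) hXbigH _
  have hTbdd : BddAbove TBig := bddAbove_mvalSet (tensorBip ρ X) hXbigH _
  refine ⟨csSup_le_csSup hSbdd hSne incl_sep, csSup_le_csSup hTbdd hTne incl_ppt,
    fun hsep => congrArg sSup (Set.Subset.antisymm (incl_sep_rev hsep) incl_sep),
    fun hppt => congrArg sSup (Set.Subset.antisymm (incl_ppt_rev hppt) incl_ppt)⟩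

end
end

section
/- For isotropic states ρ = ι(p) and σ = ι(q) on ℂ^d ⊗ ℂ^d, the trace-norm distance restricted to local (or PPT) measurements equals 2·(d/(d+1))·|p − q|. -/
open scoped BigOperators ComplexOrder

noncomputable section

/-- The projector onto the maximally entangled vector `(1/√d) ∑ i |ii⟩` on `ℂ^d ⊗ ℂ^d`. -/
def maxEnt (d : ℕ) : Matrix (Fin d × Fin d) (Fin d × Fin d) ℂ :=
  fun p q => if p.1 = p.2 ∧ q.1 = q.2 then (d : ℂ)⁻¹ else 0

/-- The normalized projector `ψ_⊥ = (1 − P)/(d² − 1)` orthogonal to the maximally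
entangled state. -/
def psiPerp (d : ℕ) : Matrix (Fin d × Fin d) (Fin d × Fin d) ℂ :=
  (((d : ℝ)^2 - 1)⁻¹) • ((1 : Matrix (Fin d × Fin d) (Fin d × Fin d) ℂ) - maxEnt d)

/-- The isotropic state `ι(p) = p ψ + (1−p) ψ_⊥`. -/
def isoState (d : ℕ) (p : ℝ) : Matrix (Fin d × Fin d) (Fin d × Fin d) ℂ :=
  p • maxEnt d + (1 - p) • psiPerp d

/-- The trace norm restricted to local measurements (products of POVMs on each factor). -/
def locNorm {α β : Type} [Fintype α] [DecidableEq α] [Fintype β] [DecidableEq β]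
    (X : Matrix (α × β) (α × β) ℂ) : ℝ :=
  sSup {r : ℝ | ∃ (Q : POVM α) (R : POVM β),
    r = ∑ i, ∑ j, ‖(prodOp (Q.T i) (R.T j) * X).trace‖}

namespace Iso
open Matrix

variable {n : Type} [Fintype n] [DecidableEq n]

omit [Fintype n] [DecidableEq n] in
lemma real_smul_eq (c : ℝ) (M : Matrix n n ℂ) : c • M = (c : ℂ) • M := by
  ext i j; simp [Complex.real_smul]

lemma smul_psd (c : ℝ) (hc : 0 ≤ c) {M : Matrix n n ℂ} (hM : M.PosSemidef) :
    (c • M).PosSemidef := by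
  exact hM.smul hc

lemma psd_trace_nonneg {M : Matrix n n ℂ} (hM : M.PosSemidef) : 0 ≤ M.trace := by
  exact hM.trace_nonneg

lemma trace_mul_nonneg {A B : Matrix n n ℂ} (hA : A.PosSemidef) (hB : B.PosSemidef) :
    0 ≤ (A * B).trace := by
  open scoped MatrixOrder in
  obtain ⟨C, rfl⟩ := CStarAlgebra.nonneg_iff_eq_star_mul_self.mp hB.nonneg
  rw [star_eq_conjTranspose, ← Matrix.mul_assoc, Matrix.trace_mul_comm, ← Matrix.mul_assoc]
  exact (hA.mul_mul_conjTranspose_same C).trace_nonneg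

lemma psd_iff_eq_ct_mul_self {A : Matrix n n ℂ} :
    A.PosSemidef ↔ ∃ B : Matrix n n ℂ, A = Bᴴ * B := by
  constructor
  · intro h
    open scoped MatrixOrder in
    obtain ⟨B, rfl⟩ := CStarAlgebra.nonneg_iff_eq_star_mul_self.mp h.nonneg
    exact ⟨B, rfl⟩
  · rintro ⟨B, rfl⟩
    exact posSemidef_conjTranspose_mul_self B


def swapM (d : ℕ) : Matrix (Fin d × Fin d) (Fin d × Fin d) ℂ :=
  fun p q => if p.1 = q.2 ∧ p.2 = q.1 then 1 else 0

variable {d : ℕ}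

lemma maxEnt_herm : (maxEnt d)ᴴ = maxEnt d := by
  ext ⟨i,j⟩ ⟨k,l⟩
  simp [maxEnt, Matrix.conjTranspose_apply, and_comm]
  split <;> simp

lemma maxEnt_mul_self (hd : d ≠ 0) : maxEnt d * maxEnt d = maxEnt d := by
  have hdc : (d : ℂ) ≠ 0 := Nat.cast_ne_zero.mpr hd
  ext ⟨i,j⟩ ⟨k,l⟩
  rw [Matrix.mul_apply]
  rw [Fintype.sum_prod_type]
  by_cases hij : i = j <;> by_cases hkl : k = l <;>
    simp [maxEnt, hij, hkl, Finset.sum_ite_eq, Finset.sum_ite_eq'] <;>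
    field_simp

lemma maxEnt_psd (hd : d ≠ 0) : (maxEnt d).PosSemidef := by
  rw [psd_iff_eq_ct_mul_self]
  exact ⟨maxEnt d, by rw [maxEnt_herm, maxEnt_mul_self hd]⟩

lemma one_sub_maxEnt_psd (hd : d ≠ 0) : ((1 : Matrix (Fin d × Fin d) (Fin d × Fin d) ℂ) - maxEnt d).PosSemidef := by
  rw [psd_iff_eq_ct_mul_self]
  refine ⟨1 - maxEnt d, ?_⟩
  rw [Matrix.conjTranspose_sub, Matrix.conjTranspose_one, maxEnt_herm]
  rw [Matrix.sub_mul, Matrix.mul_sub, Matrix.mul_sub, maxEnt_mul_self hd]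
  noncomm_ring

lemma trace_maxEnt (hd : d ≠ 0) : (maxEnt d).trace = 1 := by
  have hdc : (d : ℂ) ≠ 0 := Nat.cast_ne_zero.mpr hd
  rw [Matrix.trace]
  rw [Fintype.sum_prod_type]
  simp [Matrix.diag, maxEnt, Finset.sum_ite_eq, Finset.sum_ite_eq']
  field_simp

lemma trace_one' : (1 : Matrix (Fin d × Fin d) (Fin d × Fin d) ℂ).trace = (d:ℂ)^2 := by
  rw [Matrix.trace_one]
  simp [pow_two]

lemma swap_herm : (swapM d)ᴴ = swapM d := by
  ext ⟨i,j⟩ ⟨k,l⟩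
  simp [swapM, Matrix.conjTranspose_apply, and_comm]
  split <;> split <;> simp_all <;> tauto

lemma swap_mul_self : swapM d * swapM d = 1 := by
  ext ⟨i,j⟩ ⟨k,l⟩
  rw [Matrix.mul_apply, Fintype.sum_prod_type]
  simp [swapM, Matrix.one_apply, Prod.ext_iff, ite_and, Finset.sum_ite_eq, Finset.sum_ite_eq']

lemma one_sub_swap_psd : ((1 : Matrix (Fin d × Fin d) (Fin d × Fin d) ℂ) - swapM d).PosSemidef := by
  have h : (1 : Matrix (Fin d × Fin d) (Fin d × Fin d) ℂ) - swapM d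
      = ((2:ℝ)⁻¹) • ((1 - swapM d)ᴴ * (1 - swapM d)) := by
    rw [Matrix.conjTranspose_sub, Matrix.conjTranspose_one, swap_herm]
    rw [Matrix.sub_mul, Matrix.mul_sub, Matrix.mul_sub, swap_mul_self]
    ext p q
    simp [Matrix.smul_apply, Matrix.sub_apply, Matrix.one_apply, Complex.real_smul]
    split <;> ring
  rw [h]
  exact smul_psd _ (by norm_num) (Matrix.posSemidef_conjTranspose_mul_self _)

lemma one_add_swap_psd : ((1 : Matrix (Fin d × Fin d) (Fin d × Fin d) ℂ) + swapM d).PosSemidef := by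
  have h : (1 : Matrix (Fin d × Fin d) (Fin d × Fin d) ℂ) + swapM d
      = ((2:ℝ)⁻¹) • ((1 + swapM d)ᴴ * (1 + swapM d)) := by
    rw [Matrix.conjTranspose_add, Matrix.conjTranspose_one, swap_herm]
    rw [Matrix.add_mul, Matrix.mul_add, Matrix.mul_add, swap_mul_self]
    ext p q
    simp [Matrix.smul_apply, Matrix.add_apply, Matrix.one_apply, Complex.real_smul]
    split <;> ring
  rw [h]
  exact smul_psd _ (by norm_num) (Matrix.posSemidef_conjTranspose_mul_self _)

lemma ptranspose_maxEnt : ptranspose (maxEnt d) = ((d:ℝ)⁻¹) • swapM d := by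
  ext ⟨i,j⟩ ⟨k,l⟩
  by_cases h1 : i = l <;> by_cases h2 : j = k <;>
    simp [ptranspose, maxEnt, swapM, Matrix.smul_apply, Complex.real_smul, h1, h2] <;>
    simp [eq_comm, h1, h2]

lemma ptranspose_one : ptranspose (1 : Matrix (Fin d × Fin d) (Fin d × Fin d) ℂ) = 1 := by
  ext ⟨i,j⟩ ⟨k,l⟩
  by_cases h1 : i = k <;> by_cases h2 : j = l <;>
    simp [ptranspose, Matrix.one_apply, Prod.ext_iff, h1, h2] <;>
    simp [eq_comm, h1, h2]

lemma ptranspose_add {α β : Type} (A B : Matrix (α × β) (α × β) ℂ) :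
    ptranspose (A + B) = ptranspose A + ptranspose B := rfl

lemma ptranspose_sub {α β : Type} (A B : Matrix (α × β) (α × β) ℂ) :
    ptranspose (A - B) = ptranspose A - ptranspose B := rfl

lemma ptranspose_smul {α β : Type} (c : ℝ) (A : Matrix (α × β) (α × β) ℂ) :
    ptranspose (c • A) = c • ptranspose A := rfl

lemma trace_ptranspose {α β : Type} [Fintype α] [Fintype β] (A : Matrix (α × β) (α × β) ℂ) :
    (ptranspose A).trace = A.trace := rfl

lemma trace_key {γ : Type} [Fintype γ] (M N : Matrix γ γ ℂ) :
    (M * N).trace = ∑ x : γ × γ, M x.1 x.2 * N x.2 x.1 := by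
  rw [Fintype.sum_prod_type]
  simp [Matrix.trace, Matrix.mul_apply]

lemma trace_ptranspose_mul {α β : Type} [Fintype α] [Fintype β]
    (A B : Matrix (α × β) (α × β) ℂ) :
    (ptranspose A * ptranspose B).trace = (A * B).trace := by
  rw [trace_key, trace_key]
  exact Fintype.sum_equiv
    (Function.Involutive.toPerm
      (fun x : (α × β) × (α × β) => ((x.1.1, x.2.2), (x.2.1, x.1.2)))
      (fun x => by simp)) _ _
    (fun x => by simp [ptranspose, Function.Involutive.toPerm])


lemma abs_eq_two_max (x : ℝ) : |x| = 2 * max x 0 - x := by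
  rcases le_total x 0 with h | h
  · rw [abs_of_nonpos h, max_eq_right h]; ring
  · rw [abs_of_nonneg h, max_eq_left h]; ring

lemma key_ineq {ι : Type} [Fintype ι] (hd : 2 ≤ d) (α σ : ι → ℝ)
    (hα : ∀ i, 0 ≤ α i) (hdα : ∀ i, (d:ℝ) * α i ≤ σ i)
    (hSalpha : ∑ i, α i = 1) (hSsigma : ∑ i, σ i = (d:ℝ)^2) :
    ∑ i, |((d:ℝ)^2 * α i - σ i) / ((d:ℝ)^2 - 1)| ≤ 2 * ((d:ℝ)/(d+1)) := by
  have hd1 : (2:ℝ) ≤ (d:ℝ) := by exact_mod_cast hd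
  have hpos : (0:ℝ) < (d:ℝ)^2 - 1 := by nlinarith
  set γ : ι → ℝ := fun i => ((d:ℝ)^2 * α i - σ i) / ((d:ℝ)^2 - 1) with hγ
  have hsum : ∑ i, γ i = 0 := by
    simp only [hγ]
    rw [← Finset.sum_div, Finset.sum_sub_distrib, ← Finset.mul_sum, hSalpha, hSsigma]
    simp
  have e : (d:ℝ)/(d+1) * ((d:ℝ)^2 - 1) = (d:ℝ)*((d:ℝ)-1) := by
    have : (d:ℝ) + 1 ≠ 0 := by positivity
    field_simp
    ring
  have hbound : ∀ i, max (γ i) 0 ≤ ((d:ℝ)/(d+1)) * α i := by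
    intro i
    apply max_le
    · rw [hγ, div_le_iff₀ hpos]
      nlinarith [hdα i, hα i, e]
    · have : (0:ℝ) ≤ (d:ℝ)/(d+1) := by positivity
      exact mul_nonneg this (hα i)
  calc ∑ i, |γ i| = ∑ i, (2 * max (γ i) 0 - γ i) := by
        exact Finset.sum_congr rfl fun i _ => abs_eq_two_max (γ i)
    _ = 2 * (∑ i, max (γ i) 0) - ∑ i, γ i := by
        rw [Finset.sum_sub_distrib, Finset.mul_sum]
    _ = 2 * (∑ i, max (γ i) 0) := by rw [hsum]; ring
    _ ≤ 2 * (∑ i, ((d:ℝ)/(d+1)) * α i) := by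
        have h2 : ∑ i, max (γ i) 0 ≤ ∑ i, ((d:ℝ)/(d+1)) * α i :=
          Finset.sum_le_sum fun i _ => hbound i
        linarith
    _ = 2 * ((d:ℝ)/(d+1)) := by rw [← Finset.mul_sum, hSalpha]; ring

lemma D_decomp (hd : 2 ≤ d) : maxEnt d - psiPerp d
    = (-(((d:ℂ)^2-1)⁻¹)) • (1 : Matrix (Fin d × Fin d) (Fin d × Fin d) ℂ)
      + (1 + ((d:ℂ)^2-1)⁻¹) • maxEnt d := by
  unfold psiPerp
  rw [real_smul_eq]
  push_cast
  module

lemma core_bound {ι : Type} [Fintype ι] (hd : 2 ≤ d) (p q : ℝ)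
    (T : ι → Matrix (Fin d × Fin d) (Fin d × Fin d) ℂ)
    (hpos : ∀ i, (T i).PosSemidef) (hppt : ∀ i, (ptranspose (T i)).PosSemidef)
    (hsum : ∑ i, T i = 1) :
    ∑ i, ‖(T i * (isoState d p - isoState d q)).trace‖
      ≤ 2 * ((d:ℝ)/(d+1)) * |p - q| := by
  have hd0 : d ≠ 0 := by omega
  have hdc : (d:ℂ) ≠ 0 := Nat.cast_ne_zero.mpr hd0
  have hd1 : (2:ℝ) ≤ (d:ℝ) := by exact_mod_cast hd
  have hd2r : ((d:ℝ)^2 - 1) ≠ 0 := by nlinarith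
  set D := maxEnt d - psiPerp d with hD
  have hX : isoState d p - isoState d q = (p - q) • D := by
    rw [hD]; unfold isoState; module
  -- reals
  set a : ι → ℂ := fun i => ((T i * maxEnt d).trace) with ha
  set s : ι → ℂ := fun i => ((T i).trace) with hs
  have ha_nonneg : ∀ i, 0 ≤ a i := fun i => trace_mul_nonneg (hpos i) (maxEnt_psd hd0)
  have hs_nonneg : ∀ i, 0 ≤ s i := fun i => psd_trace_nonneg (hpos i)
  have hconstr : ∀ i, (d:ℂ) * a i ≤ s i := by
    intro i
    have h1 : a i = (ptranspose (T i) * ptranspose (maxEnt d)).trace := by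
      rw [trace_ptranspose_mul]
    have h2 : (ptranspose (T i) * ptranspose (maxEnt d)).trace
        = ((d:ℂ)⁻¹) * (ptranspose (T i) * swapM d).trace := by
      rw [ptranspose_maxEnt, real_smul_eq, Matrix.mul_smul, Matrix.trace_smul,
        smul_eq_mul]
      push_cast
      ring
    have h3 : 0 ≤ (ptranspose (T i) * (1 - swapM d)).trace :=
      trace_mul_nonneg (hppt i) one_sub_swap_psd
    have h4 : (ptranspose (T i) * (1 - swapM d)).trace
        = s i - (ptranspose (T i) * swapM d).trace := by
      rw [Matrix.mul_sub, Matrix.trace_sub, Matrix.mul_one, trace_ptranspose]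
    have h5 : (ptranspose (T i) * swapM d).trace ≤ s i := by
      rw [h4] at h3; exact sub_nonneg.mp h3
    have h6 : (d:ℂ) * a i = (ptranspose (T i) * swapM d).trace := by
      rw [h1, h2]; field_simp
    rw [h6]; exact h5
  set α : ι → ℝ := fun i => (a i).re with hα
  set σ : ι → ℝ := fun i => (s i).re with hσ
  have hα_nonneg : ∀ i, 0 ≤ α i := fun i => (Complex.nonneg_iff.mp (ha_nonneg i)).1
  have ha_eq : ∀ i, a i = (α i : ℂ) := by
    intro i
    have := (Complex.nonneg_iff.mp (ha_nonneg i)).2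
    exact Complex.ext rfl this.symm
  have hs_eq : ∀ i, s i = (σ i : ℂ) := by
    intro i
    have := (Complex.nonneg_iff.mp (hs_nonneg i)).2
    exact Complex.ext rfl this.symm
  have hdα : ∀ i, (d:ℝ) * α i ≤ σ i := by
    intro i
    have h := hconstr i
    rw [ha_eq i, hs_eq i] at h
    have : ((d:ℝ) * α i : ℂ) ≤ ((σ i : ℝ) : ℂ) := by push_cast; exact_mod_cast h
    exact_mod_cast this
  have hSa : ∑ i, a i = 1 := by
    simp only [ha]
    rw [← Matrix.trace_sum, ← Finset.sum_mul, hsum, Matrix.one_mul, trace_maxEnt hd0]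
  have hSs : ∑ i, s i = (d:ℂ)^2 := by
    simp only [hs]
    rw [← Matrix.trace_sum, hsum, trace_one']
  have hSalpha : ∑ i, α i = 1 := by
    have : ((∑ i, α i : ℝ) : ℂ) = 1 := by
      push_cast
      rw [← hSa]
      exact Finset.sum_congr rfl fun i _ => (ha_eq i).symm
    exact_mod_cast this
  have hSsigma : ∑ i, σ i = (d:ℝ)^2 := by
    have : ((∑ i, σ i : ℝ) : ℂ) = ((d:ℝ)^2 : ℝ) := by
      push_cast
      rw [← hSs]
      exact Finset.sum_congr rfl fun i _ => (hs_eq i).symm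
    exact_mod_cast this
  have htr : ∀ i, (T i * D).trace
      = ((((d:ℝ)^2 * α i - σ i) / ((d:ℝ)^2 - 1) : ℝ) : ℂ) := by
    intro i
    rw [hD, D_decomp hd, Matrix.mul_add, Matrix.mul_smul, Matrix.mul_smul,
      Matrix.trace_add, Matrix.trace_smul, Matrix.trace_smul, Matrix.mul_one,
      smul_eq_mul, smul_eq_mul]
    have ha' : ((T i * maxEnt d).trace) = ((α i : ℝ) : ℂ) := ha_eq i
    have hs' : ((T i).trace) = ((σ i : ℝ) : ℂ) := hs_eq i
    rw [ha', hs']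
    have hd2c : ((d:ℂ)^2 - 1) ≠ 0 := by
      intro h
      apply hd2r
      have : (((d:ℝ)^2 - 1 : ℝ) : ℂ) = 0 := by push_cast; exact_mod_cast h
      exact_mod_cast this
    push_cast
    field_simp
    ring
  have hmain : ∑ i, ‖(T i * D).trace‖ ≤ 2 * ((d:ℝ)/(d+1)) := by
    have : ∑ i, ‖(T i * D).trace‖
        = ∑ i, |((d:ℝ)^2 * α i - σ i) / ((d:ℝ)^2 - 1)| := by
      refine Finset.sum_congr rfl fun i _ => ?_
      rw [htr i, Complex.norm_real, Real.norm_eq_abs]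
    rw [this]
    exact key_ineq hd α σ hα_nonneg hdα hSalpha hSsigma
  calc ∑ i, ‖(T i * (isoState d p - isoState d q)).trace‖
      = ∑ i, |p - q| * ‖(T i * D).trace‖ := by
        refine Finset.sum_congr rfl fun i _ => ?_
        rw [hX, real_smul_eq, Matrix.mul_smul, Matrix.trace_smul, smul_eq_mul,
          norm_mul, Complex.norm_real, Real.norm_eq_abs]
    _ = |p - q| * ∑ i, ‖(T i * D).trace‖ := by rw [Finset.mul_sum]
    _ ≤ |p - q| * (2 * ((d:ℝ)/(d+1))) := by
        exact mul_le_mul_of_nonneg_left hmain (abs_nonneg _)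
    _ = 2 * ((d:ℝ)/(d+1)) * |p - q| := by ring


section Prod
variable {α β : Type} [Fintype α] [DecidableEq α] [Fintype β] [DecidableEq β]

lemma prodOp_conj (A : Matrix α α ℂ) (B : Matrix β β ℂ) :
    (prodOp A B)ᴴ * (prodOp A B) = prodOp (Aᴴ * A) (Bᴴ * B) := by
  ext p q
  rw [Matrix.mul_apply, Fintype.sum_prod_type]
  simp only [prodOp, Matrix.conjTranspose_apply, Matrix.mul_apply, star_mul']
  rw [Finset.sum_mul_sum]
  refine Finset.sum_congr rfl fun i _ => Finset.sum_congr rfl fun j _ => ?_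
  ring

lemma prodOp_psd {x : Matrix α α ℂ} {y : Matrix β β ℂ}
    (hx : x.PosSemidef) (hy : y.PosSemidef) : (prodOp x y).PosSemidef := by
  obtain ⟨A, hA⟩ := psd_iff_eq_ct_mul_self.mp hx
  obtain ⟨B, hB⟩ := psd_iff_eq_ct_mul_self.mp hy
  rw [hA, hB, ← prodOp_conj]
  exact Matrix.posSemidef_conjTranspose_mul_self _

lemma ptranspose_prodOp (x : Matrix α α ℂ) (y : Matrix β β ℂ) :
    ptranspose (prodOp x y) = prodOp x yᵀ := rfl

lemma prodOp_one : prodOp (1 : Matrix α α ℂ) (1 : Matrix β β ℂ) = 1 := by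
  ext ⟨i,j⟩ ⟨k,l⟩
  by_cases h1 : i = k <;> by_cases h2 : j = l <;>
    simp [prodOp, Matrix.one_apply, Prod.ext_iff, h1, h2]

lemma prodOp_sum {ι κ : Type} [Fintype ι] [Fintype κ]
    (x : ι → Matrix α α ℂ) (y : κ → Matrix β β ℂ) :
    ∑ ij : ι × κ, prodOp (x ij.1) (y ij.2) = prodOp (∑ i, x i) (∑ j, y j) := by
  ext p q
  rw [Fintype.sum_prod_type]
  simp only [Matrix.sum_apply, prodOp]
  rw [Finset.sum_mul_sum]

end Prod


section Achieve
variable {d : ℕ}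

lemma cast_dp1_ne (hd : 2 ≤ d) : ((d:ℂ) + 1) ≠ 0 := by
  have : (((d+1:ℕ)):ℂ) ≠ 0 := Nat.cast_ne_zero.mpr (by omega)
  push_cast at this
  exact this

lemma cast_dm1_ne (hd : 2 ≤ d) : ((d:ℂ) - 1) ≠ 0 := by
  intro h
  have h2 : (d:ℂ) = ((1:ℕ):ℂ) := by push_cast; linear_combination h
  have := Nat.cast_injective (R := ℂ) h2
  omega

lemma cast_sq_ne (hd : 2 ≤ d) : ((d:ℂ)^2 - 1) ≠ 0 := by
  have h : (d:ℂ)^2 - 1 = ((d:ℂ) - 1) * ((d:ℂ) + 1) := by ring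
  rw [h]
  exact mul_ne_zero (cast_dm1_ne hd) (cast_dp1_ne hd)

lemma trace_comb (hd : d ≠ 0) (a b c e : ℂ) :
    ((a • (1 : Matrix (Fin d × Fin d) (Fin d × Fin d) ℂ) + b • maxEnt d)
      * (c • (1 : Matrix (Fin d × Fin d) (Fin d × Fin d) ℂ) + e • maxEnt d)).trace
      = a*c*(d:ℂ)^2 + (a*e + b*c + b*e) := by
  rw [Matrix.add_mul, Matrix.mul_add, Matrix.mul_add]
  simp only [Matrix.smul_mul, Matrix.mul_smul, Matrix.one_mul, Matrix.mul_one,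
    maxEnt_mul_self hd, smul_smul]
  simp only [Matrix.trace_add, Matrix.trace_smul, smul_eq_mul, trace_one', trace_maxEnt hd]
  ring

/-- The two PPT measurement operators. -/
def T0 (d : ℕ) : Matrix (Fin d × Fin d) (Fin d × Fin d) ℂ :=
  (((d:ℝ)+1)⁻¹) • ((1 : Matrix (Fin d × Fin d) (Fin d × Fin d) ℂ) - maxEnt d) + maxEnt d

def T1 (d : ℕ) : Matrix (Fin d × Fin d) (Fin d × Fin d) ℂ :=
  ((d:ℝ)/((d:ℝ)+1)) • ((1 : Matrix (Fin d × Fin d) (Fin d × Fin d) ℂ) - maxEnt d)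

lemma T0_decomp : T0 d = (((d:ℂ)+1)⁻¹) • (1 : Matrix (Fin d × Fin d) (Fin d × Fin d) ℂ)
    + (1 - ((d:ℂ)+1)⁻¹) • maxEnt d := by
  unfold T0
  rw [real_smul_eq]
  push_cast
  module

lemma T1_decomp : T1 d = ((d:ℂ)/((d:ℂ)+1)) • (1 : Matrix (Fin d × Fin d) (Fin d × Fin d) ℂ)
    + (-((d:ℂ)/((d:ℂ)+1))) • maxEnt d := by
  unfold T1
  rw [real_smul_eq]
  push_cast
  module

lemma T0_psd (hd : 2 ≤ d) : (T0 d).PosSemidef := by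
  have h0 : d ≠ 0 := by omega
  exact Matrix.PosSemidef.add
    (smul_psd _ (by positivity) (one_sub_maxEnt_psd h0)) (maxEnt_psd h0)

lemma T1_psd (hd : 2 ≤ d) : (T1 d).PosSemidef := by
  have h0 : d ≠ 0 := by omega
  exact smul_psd _ (by positivity) (one_sub_maxEnt_psd h0)

lemma T_sum (hd : 2 ≤ d) : T0 d + T1 d = 1 := by
  have hc : ((d:ℝ)+1)⁻¹ + (d:ℝ)/((d:ℝ)+1) = 1 := by
    have h1 : ((d:ℝ)+1) ≠ 0 := by positivity
    field_simp
    ring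
  have step : T0 d + T1 d
      = (((d:ℝ)+1)⁻¹ + (d:ℝ)/((d:ℝ)+1)) • ((1 : Matrix (Fin d × Fin d) (Fin d × Fin d) ℂ) - maxEnt d) + maxEnt d := by
    unfold T0 T1
    module
  rw [step, hc, one_smul]
  abel

lemma T0_ppt (hd : 2 ≤ d) : (ptranspose (T0 d)).PosSemidef := by
  have h0 : d ≠ 0 := by omega
  have hr : ((d:ℝ)) ≠ 0 := Nat.cast_ne_zero.mpr h0
  have hr1 : ((d:ℝ)+1) ≠ 0 := by positivity
  have heq : ptranspose (T0 d) = (((d:ℝ)+1)⁻¹) • ((1 : Matrix (Fin d × Fin d) (Fin d × Fin d) ℂ) + swapM d) := by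
    unfold T0
    rw [ptranspose_add, ptranspose_smul, ptranspose_sub, ptranspose_one, ptranspose_maxEnt]
    match_scalars
    · field_simp
    · field_simp
      ring
  rw [heq]
  exact smul_psd _ (by positivity) one_add_swap_psd

lemma T1_ppt (hd : 2 ≤ d) : (ptranspose (T1 d)).PosSemidef := by
  have h0 : d ≠ 0 := by omega
  have hr : ((d:ℝ)) ≠ 0 := Nat.cast_ne_zero.mpr h0
  have hr1 : ((d:ℝ)+1) ≠ 0 := by positivity
  have heq : ptranspose (T1 d) = (((d:ℝ)-1)/((d:ℝ)+1)) • (1 : Matrix (Fin d × Fin d) (Fin d × Fin d) ℂ)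
      + (((d:ℝ)+1)⁻¹) • ((1 : Matrix (Fin d × Fin d) (Fin d × Fin d) ℂ) - swapM d) := by
    unfold T1
    rw [ptranspose_smul, ptranspose_sub, ptranspose_one, ptranspose_maxEnt]
    match_scalars
    · field_simp
      ring
    · field_simp
  have hd1 : (0:ℝ) ≤ ((d:ℝ)-1)/((d:ℝ)+1) := by
    have h2 : (2:ℝ) ≤ (d:ℝ) := by exact_mod_cast hd
    exact div_nonneg (by linarith) (by positivity)
  rw [heq]
  exact Matrix.PosSemidef.add (smul_psd _ hd1 Matrix.PosSemidef.one)
    (smul_psd _ (by positivity) one_sub_swap_psd)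

lemma trace_T0_D (hd : 2 ≤ d) :
    ((T0 d) * (maxEnt d - psiPerp d)).trace = (d:ℂ)/((d:ℂ)+1) := by
  have h0 : d ≠ 0 := by omega
  rw [D_decomp hd, T0_decomp, trace_comb h0]
  have h1 := cast_dp1_ne hd
  have h2 := cast_dm1_ne hd
  have h3 := cast_sq_ne hd
  field_simp
  ring

lemma trace_T1_D (hd : 2 ≤ d) :
    ((T1 d) * (maxEnt d - psiPerp d)).trace = -((d:ℂ)/((d:ℂ)+1)) := by
  have h0 : d ≠ 0 := by omega
  rw [D_decomp hd, T1_decomp, trace_comb h0]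
  have h1 := cast_dp1_ne hd
  have h2 := cast_dm1_ne hd
  have h3 := cast_sq_ne hd
  field_simp
  ring

end Achieve

end Iso

namespace Iso
open Matrix
variable {d : ℕ}

def Eb (d : ℕ) (i : Fin d) : Matrix (Fin d) (Fin d) ℂ :=
  Matrix.diagonal (fun j => if j = i then 1 else 0)

lemma Eb_psd (i : Fin d) : (Eb d i).PosSemidef := by
  apply Matrix.PosSemidef.diagonal
  intro j
  dsimp only
  split
  · exact zero_le_one
  · exact le_refl 0

lemma Eb_sum : ∑ i, Eb d i = 1 := by
  ext a b
  rw [Matrix.sum_apply]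
  by_cases h : a = b <;>
    simp [Eb, Matrix.diagonal, Matrix.one_apply, h, Finset.sum_ite_eq, Finset.sum_ite_eq']

lemma trace_prodE (i j : Fin d) (M : Matrix (Fin d × Fin d) (Fin d × Fin d) ℂ) :
    ((prodOp (Eb d i) (Eb d j)) * M).trace = M (i,j) (i,j) := by
  rw [trace_key]
  simp only [Fintype.sum_prod_type, prodOp, Eb, Matrix.diagonal_apply]
  simp [Finset.sum_ite_eq, Finset.sum_ite_eq', ite_and]

lemma D_diag (hd : 2 ≤ d) (i j : Fin d) :
    (maxEnt d - psiPerp d) (i,j) (i,j)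
      = if i = j then (((((d:ℝ)+1)⁻¹ : ℝ)) : ℂ) else (((-(((d:ℝ)^2-1)⁻¹) : ℝ)) : ℂ) := by
  have h0 : d ≠ 0 := by omega
  have hdc : (d:ℂ) ≠ 0 := Nat.cast_ne_zero.mpr h0
  have h1 := cast_dp1_ne hd
  have h3 := cast_sq_ne hd
  by_cases h : i = j <;>
    simp [maxEnt, psiPerp, Matrix.sub_apply, Matrix.smul_apply, Matrix.one_apply,
      Complex.real_smul, h, Prod.ext_iff] <;>
    push_cast <;> field_simp <;> ring

lemma loc_value (hd : 2 ≤ d) (p q : ℝ) :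
    ∑ i : Fin d, ∑ j : Fin d,
      ‖(prodOp (Eb d i) (Eb d j) * (isoState d p - isoState d q)).trace‖
      = 2 * ((d:ℝ)/((d:ℝ)+1)) * |p - q| := by
  have hd1 : (2:ℝ) ≤ (d:ℝ) := by exact_mod_cast hd
  have hsq : ((d:ℝ)^2 - 1) ≠ 0 := by nlinarith
  have hdp1 : ((d:ℝ)+1) ≠ 0 := by positivity
  have hX : isoState d p - isoState d q = (p - q) • (maxEnt d - psiPerp d) := by
    unfold isoState; module
  have hterm : ∀ i j : Fin d,
      ‖(prodOp (Eb d i) (Eb d j) * (isoState d p - isoState d q)).trace‖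
      = if i = j then |p - q| * ((d:ℝ)+1)⁻¹ else |p - q| * (((d:ℝ)^2-1)⁻¹) := by
    intro i j
    rw [hX, real_smul_eq, Matrix.mul_smul, Matrix.trace_smul, smul_eq_mul, trace_prodE,
      D_diag hd i j]
    have hsqpos : (0:ℝ) < (d:ℝ)^2 - 1 := by nlinarith
    by_cases h : i = j
    · rw [if_pos h, if_pos h, ← Complex.ofReal_mul, Complex.norm_real, Real.norm_eq_abs, abs_mul,
        abs_of_nonneg (by positivity : (0:ℝ) ≤ ((d:ℝ)+1)⁻¹)]
    · rw [if_neg h, if_neg h, ← Complex.ofReal_mul, Complex.norm_real, Real.norm_eq_abs, abs_mul,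
        abs_neg, abs_of_nonneg (le_of_lt (inv_pos.mpr hsqpos))]
  have hsplit : ∀ i : Fin d, ∑ j : Fin d,
      (if i = j then |p - q| * ((d:ℝ)+1)⁻¹ else |p - q| * (((d:ℝ)^2-1)⁻¹))
      = (d:ℝ) * (|p - q| * (((d:ℝ)^2-1)⁻¹))
        + (|p - q| * ((d:ℝ)+1)⁻¹ - |p - q| * (((d:ℝ)^2-1)⁻¹)) := by
    intro i
    have : ∀ j : Fin d, (if i = j then |p - q| * ((d:ℝ)+1)⁻¹ else |p - q| * (((d:ℝ)^2-1)⁻¹))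
        = |p - q| * (((d:ℝ)^2-1)⁻¹)
          + (if i = j then |p - q| * ((d:ℝ)+1)⁻¹ - |p - q| * (((d:ℝ)^2-1)⁻¹) else 0) := by
      intro j; split <;> ring
    rw [Finset.sum_congr rfl fun j _ => this j, Finset.sum_add_distrib,
      Finset.sum_const, Finset.sum_ite_eq]
    simp [Finset.card_univ]
  calc ∑ i : Fin d, ∑ j : Fin d,
      ‖(prodOp (Eb d i) (Eb d j) * (isoState d p - isoState d q)).trace‖
      = ∑ i : Fin d, ∑ j : Fin d,
        (if i = j then |p - q| * ((d:ℝ)+1)⁻¹ else |p - q| * (((d:ℝ)^2-1)⁻¹)) := by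
        exact Finset.sum_congr rfl fun i _ => Finset.sum_congr rfl fun j _ => hterm i j
    _ = ∑ i : Fin d, ((d:ℝ) * (|p - q| * (((d:ℝ)^2-1)⁻¹))
        + (|p - q| * ((d:ℝ)+1)⁻¹ - |p - q| * (((d:ℝ)^2-1)⁻¹))) := by
        exact Finset.sum_congr rfl fun i _ => hsplit i
    _ = (d:ℝ) * ((d:ℝ) * (|p - q| * (((d:ℝ)^2-1)⁻¹))
        + (|p - q| * ((d:ℝ)+1)⁻¹ - |p - q| * (((d:ℝ)^2-1)⁻¹))) := by
        rw [Finset.sum_const, Finset.card_univ]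
        simp only [Fintype.card_fin, nsmul_eq_mul]
    _ = 2 * ((d:ℝ)/((d:ℝ)+1)) * |p - q| := by
        field_simp
        ring

end Iso

/-- For isotropic states `ρ = ι(p)` and `σ = ι(q)` on `ℂ^d ⊗ ℂ^d`, the
trace-norm distance restricted to local (or PPT) measurements equals
`2 (d/(d+1)) |p − q|`. -/
theorem isoState_locNorm_pptNorm (d : ℕ) (hd : 2 ≤ d) (p q : ℝ)
    (hp : p ∈ Set.Icc (0:ℝ) 1) (hq : q ∈ Set.Icc (0:ℝ) 1) :
    locNorm (isoState d p - isoState d q) = 2 * ((d : ℝ) / (d + 1)) * |p - q| ∧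
    pptNorm (isoState d p - isoState d q) = 2 * ((d : ℝ) / (d + 1)) * |p - q| := by
  have hd0 : d ≠ 0 := by omega
  constructor
  · -- locNorm
    apply IsGreatest.csSup_eq
    constructor
    · -- membership: the basis POVM on each side
      refine ⟨⟨d, Iso.Eb d, Iso.Eb_psd, Iso.Eb_sum⟩, ⟨d, Iso.Eb d, Iso.Eb_psd, Iso.Eb_sum⟩, ?_⟩
      exact (Iso.loc_value hd p q).symm
    · rintro r ⟨Q, R, rfl⟩
      have hbig : ∑ ij : Fin Q.k × Fin R.k,
          ‖(prodOp (Q.T ij.1) (R.T ij.2) * (isoState d p - isoState d q)).trace‖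
          ≤ 2 * ((d:ℝ)/((d:ℝ)+1)) * |p - q| := by
        apply Iso.core_bound hd p q
        · intro ij
          exact Iso.prodOp_psd (Q.pos ij.1) (R.pos ij.2)
        · intro ij
          rw [Iso.ptranspose_prodOp]
          exact Iso.prodOp_psd (Q.pos ij.1) ((R.pos ij.2).transpose)
        · rw [Iso.prodOp_sum, Q.sum_eq, R.sum_eq, Iso.prodOp_one]
      rw [Fintype.sum_prod_type] at hbig
      exact hbig
  · -- pptNorm
    apply IsGreatest.csSup_eq
    constructor
    · refine ⟨⟨2, ![Iso.T0 d, Iso.T1 d], ?_, ?_⟩, ?_, ?_⟩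
      · intro i
        fin_cases i
        · exact Iso.T0_psd hd
        · exact Iso.T1_psd hd
      · rw [Fin.sum_univ_two]
        simp only [Matrix.cons_val_zero, Matrix.cons_val_one, Matrix.head_cons]
        exact Iso.T_sum hd
      · intro i
        fin_cases i
        · exact Iso.T0_ppt hd
        · exact Iso.T1_ppt hd
      · have hX : isoState d p - isoState d q
            = (p - q) • (maxEnt d - psiPerp d) := by
          unfold isoState; module
        have habs : ‖(d:ℂ)/((d:ℂ)+1)‖ = (d:ℝ)/((d:ℝ)+1) := by
          have : ((d:ℂ)/((d:ℂ)+1)) = (((d:ℝ)/((d:ℝ)+1) : ℝ) : ℂ) := by push_cast; ring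
          rw [this, Complex.norm_real, Real.norm_eq_abs]
          exact abs_of_nonneg (by positivity)
        rw [mval, Fin.sum_univ_two]
        simp only [Matrix.cons_val_zero, Matrix.cons_val_one, Matrix.head_cons]
        rw [hX, Iso.real_smul_eq, Matrix.mul_smul, Matrix.mul_smul, Matrix.trace_smul,
          Matrix.trace_smul, smul_eq_mul, smul_eq_mul, Iso.trace_T0_D hd, Iso.trace_T1_D hd,
          norm_mul, norm_mul, Complex.norm_real, Real.norm_eq_abs, norm_neg, habs]
        ring
    · rintro r ⟨P, hppt, rfl⟩
      exact Iso.core_bound hd p q P.T P.pos hppt P.sum_eq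


end
end
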